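/- arXiv:2011.07408 — 4 statements merged into one kernel-verified Lean document; each statement's English description precedes it below -/
import Mathlib

section
/- Let F = F_2, m ≥ 2, and let τ, θ ∈ ℕ^{2^m} with |τ| = |θ| = n; set Δ_i = τ_i − θ_i for 1 ≤ i ≤ 2^m. Then the following are equivalent: (A') for every 1 ≤ j ≤ m the vectors Del_j(e_τ) and Del_j(e_θ) belong to the same S_n-orbit on V^{m−1}; (B) for all 1 < i ≤ 2^m one has Δ_i = (−1)^{ξ(i−1)} Δ_1, where ξ(i) is the sum of the binary digits of i. -/
open MvPolynomial

/-- The index of the cell containing position `p`, when `ℕ` is divided into consecutive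
cells of lengths `τ 0, τ 1, …, τ (N-1)` (positions and cells are 0-indexed):
it is the number of cells whose end lies at or before `p`. -/
def cellIndex {N : ℕ} (τ : Fin N → ℕ) (p : ℕ) : ℕ :=
  (Finset.univ.filter (fun c : Fin N => ∑ c' ∈ Finset.Iic c, τ c' ≤ p)).card

/-- The orbit representative `e_τ ∈ V^m` attached to `τ ∈ ℕ^(2^m)` with `|τ| = n`:
its `j`-th component (`j` 0-indexed, corresponding to `j+1` in the paper) is the
concatenation `(1^{b_1}, 0^{b_2}, 1^{b_3}, 0^{b_4}, …)` where `b_r` is the sum of `τ`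
over the `r`-th block of length `2^(m-j-1)`; equivalently the position `i` entry is `1`
exactly when the binary digit number `m-j-1` of the cell index of `i` is `0`. -/
def eTau (m n : ℕ) (τ : Fin (2 ^ m) → ℕ) : Fin m × Fin n → ZMod 2 :=
  fun ji => if Nat.testBit (cellIndex τ (ji.2 : ℕ)) (m - 1 - (ji.1 : ℕ)) then 0 else 1

/-! ### Auxiliary lemmas on binary digit sums -/

lemma xi_two_mul_add (a r : ℕ) (hr : r < 2) :
    (Nat.digits 2 (2 * a + r)).sum = r + (Nat.digits 2 a).sum := by
  rcases Nat.eq_zero_or_pos (2 * a + r) with h | h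
  · have h1 : a = 0 := by omega
    have h2 : r = 0 := by omega
    simp [h1, h2]
  · rw [Nat.digits_def' (by norm_num) h]
    have h1 : (2 * a + r) % 2 = r := by omega
    have h2 : (2 * a + r) / 2 = a := by omega
    simp [h1, h2]

lemma two_mul_add_xor_one (a r : ℕ) (hr : r < 2) : (2 * a + r) ^^^ 1 = 2 * a + (1 - r) := by
  apply Nat.eq_of_testBit_eq
  intro i
  rw [Nat.testBit_xor]
  cases i with
  | zero =>
    simp only [Nat.testBit_zero]
    interval_cases r <;> simp <;> omega
  | succ i =>
    simp only [Nat.testBit_add_one]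
    have h2 : (2 * a + r) / 2 = a := by omega
    have h3 : (2 * a + (1 - r)) / 2 = a := by omega
    have h4 : (1 : ℕ) / 2 = 0 := by norm_num
    simp [h2, h3, h4]

lemma two_mul_add_xor_pow (a r k : ℕ) (hr : r < 2) :
    (2 * a + r) ^^^ 2 ^ (k + 1) = 2 * (a ^^^ 2 ^ k) + r := by
  apply Nat.eq_of_testBit_eq
  intro i
  rw [Nat.testBit_xor]
  cases i with
  | zero =>
    simp only [Nat.testBit_zero]
    have h1 : (2 ^ (k+1)) % 2 = 0 := by simp [Nat.pow_succ, Nat.mul_mod_left]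
    have h2 : (2 * a + r) % 2 = r := by omega
    have h3 : (2 * (a ^^^ 2 ^ k) + r) % 2 = r := by omega
    simp [h1, h2, h3]
  | succ i =>
    simp only [Nat.testBit_add_one]
    have h2 : (2 * a + r) / 2 = a := by omega
    have h3 : (2 * (a ^^^ 2^k) + r) / 2 = a ^^^ 2^k := by omega
    have h4 : (2 ^ (k+1)) / 2 = 2 ^ k := by omega
    simp [h2, h3, h4]

lemma neg_pow_xi_xor_pow (k : ℕ) : ∀ c : ℕ,
    ((-1 : ℤ)) ^ ((Nat.digits 2 (c ^^^ 2 ^ k)).sum) = -(-1) ^ ((Nat.digits 2 c).sum) := by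
  induction k with
  | zero =>
    intro c
    have hc : c = 2 * (c / 2) + c % 2 := by omega
    rw [hc, pow_zero, two_mul_add_xor_one _ _ (by omega),
      xi_two_mul_add _ _ (by omega), xi_two_mul_add _ _ (by omega)]
    have : c % 2 = 0 ∨ c % 2 = 1 := by omega
    rcases this with h | h <;> rw [h] <;> simp [pow_add]
  | succ k ih =>
    intro c
    have hc : c = 2 * (c / 2) + c % 2 := by omega
    rw [hc, two_mul_add_xor_pow _ _ _ (by omega),
      xi_two_mul_add _ _ (by omega), xi_two_mul_add _ _ (by omega),
      pow_add, pow_add, ih]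
    ring

/-! ### Auxiliary lemmas on `cellIndex` -/

lemma lt_cellIndex_iff {N : ℕ} (τ : Fin N → ℕ) (p : ℕ) (c : Fin N) :
    (c : ℕ) < cellIndex τ p ↔ ∑ c' ∈ Finset.Iic c, τ c' ≤ p := by
  constructor
  · intro h
    by_contra hc
    push_neg at hc
    have hsub : (Finset.univ.filter (fun c' : Fin N => ∑ x ∈ Finset.Iic c', τ x ≤ p)) ⊆
        Finset.Iio c := by
      intro c' hc'
      simp only [Finset.mem_filter, Finset.mem_univ, true_and] at hc'
      rw [Finset.mem_Iio]
      by_contra hlt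
      push_neg at hlt
      exact absurd (le_trans (Finset.sum_le_sum_of_subset (Finset.Iic_subset_Iic.2 hlt)) hc')
        (by omega)
    have := Finset.card_le_card hsub
    rw [Fin.card_Iio] at this
    unfold cellIndex at h
    omega
  · intro h
    have hsub : Finset.Iic c ⊆
        (Finset.univ.filter (fun c' : Fin N => ∑ x ∈ Finset.Iic c', τ x ≤ p)) := by
      intro c' hc'
      rw [Finset.mem_Iic] at hc'
      simp only [Finset.mem_filter, Finset.mem_univ, true_and]
      exact le_trans (Finset.sum_le_sum_of_subset (Finset.Iic_subset_Iic.2 hc')) h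
    have := Finset.card_le_card hsub
    rw [Fin.card_Iic] at this
    unfold cellIndex
    omega

lemma cellIndex_eq_iff {N : ℕ} (τ : Fin N → ℕ) (p : ℕ) (c : Fin N) :
    cellIndex τ p = (c : ℕ) ↔
      ∑ c' ∈ Finset.Iio c, τ c' ≤ p ∧ p < ∑ c' ∈ Finset.Iio c, τ c' + τ c := by
  have h1 := lt_cellIndex_iff τ p c
  rw [show ∑ c' ∈ Finset.Iic c, τ c' = ∑ c' ∈ Finset.Iio c, τ c' + τ c by
    rw [← Finset.Iio_insert, Finset.sum_insert (by simp)]; ring] at h1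
  rcases Nat.eq_zero_or_pos (c : ℕ) with hc | hc
  · have hIio : Finset.Iio c = ∅ := by
      ext x; simp only [Finset.mem_Iio, Finset.notMem_empty, iff_false]
      intro hx
      have := Fin.lt_iff_val_lt_val.1 hx
      omega
    rw [hIio] at h1 ⊢
    simp only [Finset.sum_empty, zero_add] at h1 ⊢
    rw [hc] at h1
    simp only [hc, Nat.zero_le, true_and]
    constructor
    · intro h
      by_contra hp
      push_neg at hp
      have := h1.2 hp
      omega
    · intro h
      by_contra h0
      have h0' : 0 < cellIndex τ p := by omega
      have := h1.1 h0'
      omega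
  · have hN : 0 < N := c.pos
    have h2 := lt_cellIndex_iff τ p ⟨(c : ℕ) - 1, by omega⟩
    have hIic : Finset.Iic (⟨(c : ℕ) - 1, by omega⟩ : Fin N) = Finset.Iio c := by
      ext x
      simp only [Finset.mem_Iic, Finset.mem_Iio, Fin.le_def, Fin.lt_def]
      omega
    rw [hIic] at h2
    simp only [Fin.val_mk] at h2
    constructor
    · intro h
      constructor
      · exact h2.1 (by omega)
      · by_contra hp
        push_neg at hp
        have := h1.2 hp
        omega
    · intro ⟨ha, hb⟩
      have l1 := h2.2 ha
      have l2 : ¬ ((c : ℕ) < cellIndex τ p) := by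
        intro hlt
        have := h1.1 hlt
        omega
      omega

lemma cellIndex_lt {N n : ℕ} (τ : Fin N → ℕ) (hτ : ∑ c, τ c = n) (p : ℕ) (hp : p < n) :
    cellIndex τ p < N := by
  have hN : 0 < N := by
    by_contra h
    push_neg at h
    interval_cases N
    simp at hτ
    omega
  by_contra h
  push_neg at h
  set c : Fin N := ⟨N - 1, by omega⟩ with hc
  have h1 : (c : ℕ) < cellIndex τ p := by
    show N - 1 < cellIndex τ p
    omega
  have h2 := (lt_cellIndex_iff τ p c).1 h1
  have hIic : Finset.Iic c = Finset.univ := by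
    ext x
    simp only [Finset.mem_Iic, Finset.mem_univ, iff_true, Fin.le_def]
    show (x : ℕ) ≤ N - 1
    omega
  rw [hIic, hτ] at h2
  omega

lemma card_cell_fiber {N n : ℕ} (τ : Fin N → ℕ) (hτ : ∑ c, τ c = n) (c : Fin N) :
    (Finset.univ.filter (fun i : Fin n => cellIndex τ (i : ℕ) = (c : ℕ))).card = τ c := by
  have hle : ∑ c' ∈ Finset.Iio c, τ c' + τ c ≤ n := by
    rw [← hτ]
    have h : ∑ c' ∈ Finset.Iic c, τ c' = ∑ c' ∈ Finset.Iio c, τ c' + τ c := by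
      rw [← Finset.Iio_insert, Finset.sum_insert (by simp)]; ring
    rw [← h]
    exact Finset.sum_le_sum_of_subset (Finset.subset_univ _)
  rw [show τ c = (Finset.Ico (∑ c' ∈ Finset.Iio c, τ c')
      (∑ c' ∈ Finset.Iio c, τ c' + τ c)).card by rw [Nat.card_Ico]; omega]
  refine Finset.card_bij (fun i _ => (i : ℕ)) ?_ ?_ ?_
  · intro i hi
    simp only [Finset.mem_filter, Finset.mem_univ, true_and] at hi
    rw [Finset.mem_Ico]
    exact (cellIndex_eq_iff τ i c).1 hi
  · intro a _ b _ hab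
    exact Fin.val_injective hab
  · intro x hx
    rw [Finset.mem_Ico] at hx
    refine ⟨⟨x, by omega⟩, ?_, rfl⟩
    simp only [Finset.mem_filter, Finset.mem_univ, true_and]
    exact (cellIndex_eq_iff τ x c).2 ⟨hx.1, hx.2⟩

/-- The cell index, as an element of `Fin N`. -/
def cellFin {N n : ℕ} (τ : Fin N → ℕ) (hτ : ∑ c, τ c = n) (i : Fin n) : Fin N :=
  ⟨cellIndex τ (i : ℕ), cellIndex_lt τ hτ (i : ℕ) i.isLt⟩

lemma card_pattern {N n : ℕ} (τ : Fin N → ℕ) (hτ : ∑ c, τ c = n)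
    {X : Type*} [DecidableEq X] (g : Fin N → X) (x : X) :
    (Finset.univ.filter (fun i : Fin n => g (cellFin τ hτ i) = x)).card =
      ∑ c ∈ Finset.univ.filter (fun c => g c = x), τ c := by
  rw [Finset.card_eq_sum_card_fiberwise
    (f := cellFin τ hτ) (t := Finset.univ.filter (fun c => g c = x))
    (fun i hi => by
      simp only [Finset.coe_filter, Set.mem_setOf_eq, Finset.mem_filter, Finset.mem_univ, true_and] at hi ⊢
      exact hi)]
  apply Finset.sum_congr rfl
  intro c hc
  simp only [Finset.mem_filter, Finset.mem_univ, true_and] at hc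
  rw [← card_cell_fiber τ hτ c]
  congr 1
  ext i
  simp only [Finset.mem_filter, Finset.mem_univ, true_and]
  constructor
  · rintro ⟨-, h2⟩
    exact congrArg Fin.val h2
  · intro h
    have h2 : cellFin τ hτ i = c := Fin.ext h
    exact ⟨by rw [h2]; exact hc, h2⟩

/-! ### Bit patterns of cells -/

/-- masked bit pattern of a cell (component `j` suppressed) -/
def gPat (m : ℕ) (j : Fin m) (c : Fin (2 ^ m)) : Fin m → ZMod 2 :=
  fun j' => if j' = j then 0 else if Nat.testBit (c : ℕ) (m - 1 - (j' : ℕ)) then 0 else 1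

lemma gPat_eq_iff (m : ℕ) (j : Fin m) (c c' : Fin (2 ^ m)) :
    gPat m j c' = gPat m j c ↔
      ∀ i : ℕ, i ≠ m - 1 - (j : ℕ) → Nat.testBit (c' : ℕ) i = Nat.testBit (c : ℕ) i := by
  constructor
  · intro h i hik
    rcases Nat.lt_or_ge i m with him | him
    · have hj' : (⟨m - 1 - i, by omega⟩ : Fin m) ≠ j := by
        intro heq
        apply hik
        have : m - 1 - i = (j : ℕ) := congrArg Fin.val heq
        omega
      have := congrFun h ⟨m - 1 - i, by omega⟩
      rw [gPat, gPat] at this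
      simp only [if_neg hj'] at this
      have hmi : m - 1 - (m - 1 - i) = i := by omega
      rw [hmi] at this
      by_contra hne
      rcases Bool.eq_false_or_eq_true (Nat.testBit (c' : ℕ) i) with h1 | h1 <;>
        rcases Bool.eq_false_or_eq_true (Nat.testBit (c : ℕ) i) with h2 | h2 <;>
          simp [h1, h2] at this hne
    · rw [Nat.testBit_lt_two_pow (lt_of_lt_of_le c'.isLt
          (Nat.pow_le_pow_right (by norm_num) him)),
        Nat.testBit_lt_two_pow (lt_of_lt_of_le c.isLt
          (Nat.pow_le_pow_right (by norm_num) him))]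
  · intro h
    funext j'
    rw [gPat, gPat]
    by_cases hj' : j' = j
    · simp [hj']
    · have hb : Nat.testBit (c' : ℕ) (m - 1 - (j' : ℕ)) =
          Nat.testBit (c : ℕ) (m - 1 - (j' : ℕ)) := by
        apply h
        intro heq
        apply hj'
        have h1 : (j' : ℕ) < m := j'.isLt
        have h2 : (j : ℕ) < m := j.isLt
        exact Fin.ext (by omega)
      rw [hb]

lemma bits_eq_iff (m : ℕ) (c c' : Fin (2 ^ m)) (k : ℕ) (hk : k < m) :
    (∀ i : ℕ, i ≠ k → Nat.testBit (c' : ℕ) i = Nat.testBit (c : ℕ) i) ↔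
      (c' = c ∨ (c' : ℕ) = (c : ℕ) ^^^ 2 ^ k) := by
  constructor
  · intro h
    by_cases hb : Nat.testBit (c' : ℕ) k = Nat.testBit (c : ℕ) k
    · left
      apply Fin.ext
      apply Nat.eq_of_testBit_eq
      intro i
      by_cases hik : i = k
      · rw [hik]; exact hb
      · exact h i hik
    · right
      apply Nat.eq_of_testBit_eq
      intro i
      rw [Nat.testBit_xor]
      by_cases hik : i = k
      · subst hik
        rw [Nat.testBit_two_pow_self]
        rcases Bool.eq_false_or_eq_true (Nat.testBit (c : ℕ) i) with h2 | h2 <;>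
          rcases Bool.eq_false_or_eq_true (Nat.testBit (c' : ℕ) i) with h1 | h1 <;>
            simp [h1, h2] at hb ⊢
      · rw [Nat.testBit_two_pow_of_ne (fun he => hik he.symm)]
        simp [h i hik]
  · intro h i hik
    rcases h with h | h
    · rw [h]
    · rw [h, Nat.testBit_xor, Nat.testBit_two_pow_of_ne (fun he => hik he.symm)]
      simp

lemma fiber_pair (m : ℕ) (j : Fin m) (c : Fin (2 ^ m)) :
    Finset.univ.filter (fun c' : Fin (2 ^ m) => gPat m j c' = gPat m j c) =
      {c, ⟨(c : ℕ) ^^^ 2 ^ (m - 1 - (j : ℕ)),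
        Nat.xor_lt_two_pow c.isLt (Nat.pow_lt_pow_right (by norm_num)
          (by have := j.isLt; omega))⟩} := by
  ext c'
  simp only [Finset.mem_filter, Finset.mem_univ, true_and, Finset.mem_insert,
    Finset.mem_singleton]
  rw [gPat_eq_iff, bits_eq_iff m c c' (m - 1 - (j : ℕ)) (by have := j.isLt; omega)]
  constructor
  · rintro (h | h)
    · exact Or.inl h
    · exact Or.inr (Fin.ext h)
  · rintro (h | h)
    · exact Or.inl h
    · exact Or.inr (congrArg Fin.val h)

lemma ne_xor (m : ℕ) (c : Fin (2 ^ m)) (k : ℕ) (hk : k < m)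
    (cx : Fin (2 ^ m)) (hcx : (cx : ℕ) = (c : ℕ) ^^^ 2 ^ k) : c ≠ cx := by
  intro h
  have h1 : (c : ℕ) = (c : ℕ) ^^^ 2 ^ k := by rw [← hcx, h]
  have h2 := congrArg (fun x => Nat.testBit x k) h1
  simp only [Nat.testBit_xor, Nat.testBit_two_pow_self] at h2
  rcases Bool.eq_false_or_eq_true (Nat.testBit (c : ℕ) k) with h3 | h3 <;> simp [h3] at h2

/-! ### Permutations versus fiber cardinalities -/

lemma exists_perm_iff {α X : Type*} [Fintype α] [DecidableEq α] [DecidableEq X] (u v : α → X) :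
    (∃ σ : Equiv.Perm α, ∀ i, u (σ i) = v i) ↔
      ∀ x, (Finset.univ.filter fun i => u i = x).card =
        (Finset.univ.filter fun i => v i = x).card := by
  constructor
  · rintro ⟨σ, hσ⟩ x
    refine Finset.card_bij (fun i _ => σ.symm i) ?_ ?_ ?_
    · intro i hi
      simp only [Finset.mem_filter, Finset.mem_univ, true_and] at hi ⊢
      rw [← hσ, Equiv.apply_symm_apply]
      exact hi
    · intro a _ b _ hab
      exact σ.symm.injective hab
    · intro j hj
      simp only [Finset.mem_filter, Finset.mem_univ, true_and] at hj
      exact ⟨σ j, by simp only [Finset.mem_filter, Finset.mem_univ, true_and, hσ, hj], by simp⟩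
  · intro h
    have e : ∀ x, { a // v a = x } ≃ { a // u a = x } := fun x =>
      Fintype.equivOfCardEq (by
        rw [Fintype.card_subtype, Fintype.card_subtype]
        exact (h x).symm)
    exact ⟨Equiv.ofFiberEquiv e, fun i => Equiv.ofFiberEquiv_map e i⟩

/-! ### The pairwise condition versus (B) -/

lemma stepD_forward (m : ℕ) (τ θ : Fin (2 ^ m) → ℕ)
    (hpair : ∀ k, k < m → ∀ c cx : Fin (2 ^ m), (cx : ℕ) = (c : ℕ) ^^^ 2 ^ k →
      τ c + τ cx = θ c + θ cx) :
    ∀ c : Fin (2 ^ m), (τ c : ℤ) - θ c =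
      (-1) ^ ((Nat.digits 2 (c : ℕ)).sum) * ((τ 0 : ℤ) - θ 0) := by
  have H : ∀ v : ℕ, ∀ c : Fin (2 ^ m), (c : ℕ) = v → (τ c : ℤ) - θ c =
      (-1) ^ ((Nat.digits 2 (c : ℕ)).sum) * ((τ 0 : ℤ) - θ 0) := by
    intro v
    induction v using Nat.strong_induction_on with
    | _ v ih =>
      intro c hc
      by_cases h0 : (c : ℕ) = 0
      · have hc0 : c = 0 := by
          apply Fin.ext
          simp [h0]
        subst hc0
        rw [h0]
        simp
      · obtain ⟨k, hk1, hk2⟩ := Nat.exists_most_significant_bit h0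
        have hkm : k < m := by
          by_contra hkm
          push_neg at hkm
          have : Nat.testBit (c : ℕ) k = false :=
            Nat.testBit_lt_two_pow (lt_of_lt_of_le c.isLt
              (Nat.pow_le_pow_right (by norm_num) hkm))
          rw [hk1] at this
          exact Bool.noConfusion this
        set c' : Fin (2 ^ m) := ⟨(c : ℕ) ^^^ 2 ^ k,
          Nat.xor_lt_two_pow c.isLt (Nat.pow_lt_pow_right (by norm_num) hkm)⟩ with hc'
        have hval : (c' : ℕ) = (c : ℕ) ^^^ 2 ^ k := rfl
        have hlt : (c' : ℕ) < (c : ℕ) := by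
          apply Nat.lt_of_testBit k
          · rw [hval, Nat.testBit_xor, hk1, Nat.testBit_two_pow_self]
            rfl
          · exact hk1
          · intro i hi
            rw [hval, Nat.testBit_xor, Nat.testBit_two_pow_of_ne (by omega)]
            simp
        have hpc := hpair k hkm c' c (by rw [hval, Nat.xor_xor_cancel_right])
        have ihc := ih (c' : ℕ) (by omega) c' rfl
        have hsign : ((-1 : ℤ)) ^ ((Nat.digits 2 ((c' : ℕ) ^^^ 2 ^ k)).sum) =
            -(-1) ^ ((Nat.digits 2 (c' : ℕ)).sum) := neg_pow_xi_xor_pow k _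
        rw [hval, Nat.xor_xor_cancel_right] at hsign
        simp only [hval] at ihc
        have hz : (τ c' : ℤ) + τ c = θ c' + θ c := by exact_mod_cast hpc
        rw [hsign]
        linarith [ihc, hz]
  exact fun c => H (c : ℕ) c rfl

lemma stepD_backward (m : ℕ) (τ θ : Fin (2 ^ m) → ℕ)
    (hB : ∀ c : Fin (2 ^ m), c ≠ 0 → (τ c : ℤ) - θ c =
      (-1) ^ ((Nat.digits 2 (c : ℕ)).sum) * ((τ 0 : ℤ) - θ 0)) :
    ∀ k, k < m → ∀ c cx : Fin (2 ^ m), (cx : ℕ) = (c : ℕ) ^^^ 2 ^ k →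
      τ c + τ cx = θ c + θ cx := by
  have hall : ∀ c : Fin (2 ^ m), (τ c : ℤ) - θ c =
      (-1) ^ ((Nat.digits 2 (c : ℕ)).sum) * ((τ 0 : ℤ) - θ 0) := by
    intro c
    by_cases hc : c = 0
    · subst hc
      have h0 : ((0 : Fin (2 ^ m)) : ℕ) = 0 := rfl
      rw [h0]
      simp
    · exact hB c hc
  intro k hk c cx hcx
  have h1 := hall c
  have h2 := hall cx
  rw [hcx] at h2
  rw [neg_pow_xi_xor_pow k (c : ℕ)] at h2
  have : (τ c : ℤ) + τ cx = θ c + θ cx := by linarith [h1, h2]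
  exact_mod_cast this

/-! ### Main theorem -/

/-- for `τ, θ ∈ ℕ^(2^m)` with `|τ| = |θ| = n` and `m ≥ 2`, the following
are equivalent: (A') for every `j` the vectors `Del_j(e_τ)` and `Del_j(e_θ)` lie in the
same `S_n`-orbit on `V^(m-1)`; (B) `Δ_i = (-1)^{ξ(i-1)} Δ_1` for all `1 < i ≤ 2^m`,
where `Δ_i = τ_i - θ_i` and `ξ` is the binary digit sum. (Here indices are 0-indexed,
so (B) reads `Δ_c = (-1)^{ξ(c)} Δ_0` for `c ≠ 0`.) -/
theorem stmt16 (m n : ℕ) (hm : 2 ≤ m) (τ θ : Fin (2 ^ m) → ℕ)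
    (hτ : ∑ c, τ c = n) (hθ : ∑ c, θ c = n) :
    -- (A'): deleting any one component, e_τ and e_θ lie in the same S_n-orbit
    (∀ j : Fin m, ∃ σ : Equiv.Perm (Fin n), ∀ j' : Fin m, j' ≠ j → ∀ i : Fin n,
        eTau m n τ (j', σ i) = eTau m n θ (j', i)) ↔
    -- (B)
    (∀ c : Fin (2 ^ m), c ≠ 0 →
        (τ c : ℤ) - (θ c : ℤ) =
          (-1) ^ ((Nat.digits 2 (c : ℕ)).sum) * ((τ 0 : ℤ) - (θ 0 : ℤ))) := by
  classical
  -- Step 1: for each j, the orbit condition is equivalent to the pair condition for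
  -- the bit k = m - 1 - j.
  have step1 : ∀ j : Fin m,
      ((∃ σ : Equiv.Perm (Fin n), ∀ j' : Fin m, j' ≠ j → ∀ i : Fin n,
          eTau m n τ (j', σ i) = eTau m n θ (j', i)) ↔
        (∀ c cx : Fin (2 ^ m), (cx : ℕ) = (c : ℕ) ^^^ 2 ^ (m - 1 - (j : ℕ)) →
          τ c + τ cx = θ c + θ cx)) := by
    intro j
    have hA : (∃ σ : Equiv.Perm (Fin n), ∀ j' : Fin m, j' ≠ j → ∀ i : Fin n,
          eTau m n τ (j', σ i) = eTau m n θ (j', i)) ↔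
        (∃ σ : Equiv.Perm (Fin n), ∀ i : Fin n,
          gPat m j (cellFin τ hτ (σ i)) = gPat m j (cellFin θ hθ i)) := by
      apply exists_congr
      intro σ
      constructor
      · intro h i
        funext j'
        rw [gPat, gPat]
        by_cases hj' : j' = j
        · simp [hj']
        · rw [if_neg hj', if_neg hj']
          exact h j' hj' i
      · intro h j' hj' i
        have := congrFun (h i) j'
        rw [gPat, gPat, if_neg hj', if_neg hj'] at this
        exact this
    refine hA.trans ((exists_perm_iff (fun i : Fin n => gPat m j (cellFin τ hτ i))
      (fun i : Fin n => gPat m j (cellFin θ hθ i))).trans ?_)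
    have hcard : ∀ x : Fin m → ZMod 2,
        ((Finset.univ.filter fun i : Fin n => gPat m j (cellFin τ hτ i) = x).card =
          (Finset.univ.filter fun i : Fin n => gPat m j (cellFin θ hθ i) = x).card) ↔
        (∑ c ∈ Finset.univ.filter (fun c => gPat m j c = x), τ c =
          ∑ c ∈ Finset.univ.filter (fun c => gPat m j c = x), θ c) := by
      intro x
      rw [card_pattern τ hτ (gPat m j) x, card_pattern θ hθ (gPat m j) x]
    refine (forall_congr' hcard).trans ?_
    -- now: sums over fibers equal  ↔  pair condition
    constructor
    · intro h c cx hcx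
      have hne := ne_xor m c (m - 1 - (j : ℕ)) (by have := j.isLt; omega) cx hcx
      have := h (gPat m j c)
      rw [fiber_pair m j c] at this
      have hcx' : cx = (⟨(c : ℕ) ^^^ 2 ^ (m - 1 - (j : ℕ)),
          Nat.xor_lt_two_pow c.isLt (Nat.pow_lt_pow_right (by norm_num)
            (by have := j.isLt; omega))⟩ : Fin (2 ^ m)) := Fin.ext hcx
      rw [← hcx'] at this
      rw [Finset.sum_pair hne, Finset.sum_pair hne] at this
      exact this
    · intro h x
      by_cases hx : ∃ c : Fin (2 ^ m), gPat m j c = x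
      · obtain ⟨c, hc⟩ := hx
        have hne := ne_xor m c (m - 1 - (j : ℕ)) (by have := j.isLt; omega)
          ⟨(c : ℕ) ^^^ 2 ^ (m - 1 - (j : ℕ)),
            Nat.xor_lt_two_pow c.isLt (Nat.pow_lt_pow_right (by norm_num)
              (by have := j.isLt; omega))⟩ rfl
        rw [← hc, fiber_pair m j c, Finset.sum_pair hne, Finset.sum_pair hne]
        exact h c _ rfl
      · push_neg at hx
        have : Finset.univ.filter (fun c : Fin (2 ^ m) => gPat m j c = x) = ∅ := by
          ext c
          simp only [Finset.mem_filter, Finset.mem_univ, true_and,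
            Finset.notMem_empty, iff_false]
          exact hx c
        rw [this]
        simp
  rw [forall_congr' step1]
  -- Step 2: reindex j ↦ k = m - 1 - j and finish.
  constructor
  · intro h c0 _
    refine stepD_forward m τ θ ?_ c0
    intro k hk c cx hcx
    have hj : (m : ℕ) - 1 - ((⟨m - 1 - k, by omega⟩ : Fin m) : ℕ) = k := by
      show m - 1 - (m - 1 - k) = k
      omega
    exact h ⟨m - 1 - k, by omega⟩ c cx (by rw [hj]; exact hcx)
  · intro h j
    exact stepD_backward m τ θ h (m - 1 - (j : ℕ)) (by have := j.isLt; omega)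
end

section
/- Let F = F_2, m ≥ 1, and n ≥ 2, and let S_n act on V = F_2^n by permuting coordinates and diagonally on V^m. Then S_{n,m} = {σ_{2^r}(α) | r ≥ 0, |α| ≥ 1, r + |α| − 1 ≤ ⌊log_2(n)⌋, α_j ∈ {0,1} for 1 ≤ j ≤ m} is a separating set for F_2[V^m]^{S_n} that is minimal with respect to inclusion: no proper subset of S_{n,m} is separating. -/
open MvPolynomial



open MvPolynomial

/-- The elementary multisymmetric polynomial
`σ_t(α) = Σ_{i_1 < … < i_t} x^α_{i_1} ⋯ x^α_{i_t}`, where `x^α_i = ∏_j x(j)_i^{α_j}`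
and the variable `x(j)_i` is indexed by the pair `(j, i)`. -/
noncomputable def msym {F : Type*} [CommSemiring F] (n m : ℕ) (t : ℕ) (α : Fin m → ℕ) :
    MvPolynomial (Fin m × Fin n) F :=
  ∑ s ∈ Finset.powersetCard t (Finset.univ : Finset (Fin n)),
    ∏ i ∈ s, ∏ j, (X (j, i) : MvPolynomial (Fin m × Fin n) F) ^ (α j)

/-- The set
`S_{n,m} = {σ_{2^r}(α) | r ≥ 0, |α| ≥ 1, r + |α| - 1 ≤ ⌊log_2 n⌋, α_j ∈ {0,1}}`. -/
noncomputable def Snm (n m : ℕ) : Set (MvPolynomial (Fin m × Fin n) (ZMod 2)) :=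
  {f | ∃ (r : ℕ) (α : Fin m → ℕ), (∀ j, α j ≤ 1) ∧ 1 ≤ ∑ j, α j ∧
      r + (∑ j, α j) - 1 ≤ Nat.log 2 n ∧ f = msym n m (2 ^ r) α}

/-- A set of polynomials is separating for `F_2[V^m]^{S_n}` if it separates any two
points of `V^m` lying in different `S_n`-orbits (for the diagonal permutation action). -/
def IsSepMulti (n m : ℕ) (S : Set (MvPolynomial (Fin m × Fin n) (ZMod 2))) : Prop :=
  ∀ u v : Fin m × Fin n → ZMod 2,
    (¬ ∃ σ : Equiv.Perm (Fin n), ∀ p : Fin m × Fin n, u (p.1, σ p.2) = v p) →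
    ∃ f ∈ S, eval u f ≠ eval v f

namespace S17



lemma zmod2_eq_zero {x : ZMod 2} (h : x ≠ 1) : x = 0 := by revert h; revert x; decide

/-- number of members of `A` that are `1` on all of `S`. -/
def cnt {m : ℕ} (S : Finset (Fin m)) (A : Multiset (Fin m → ZMod 2)) : ℕ :=
  Multiset.card (A.filter fun w => ∀ j ∈ S, w j = 1)

lemma cnt_add {m : ℕ} (S : Finset (Fin m)) (A B : Multiset (Fin m → ZMod 2)) :
    cnt S (A + B) = cnt S A + cnt S B := by
  simp [cnt, Multiset.filter_add]

lemma cnt_le_card {m : ℕ} (S : Finset (Fin m)) (A : Multiset (Fin m → ZMod 2)) :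
    cnt S A ≤ Multiset.card A :=
  Multiset.card_le_card (Multiset.filter_le _ _)

lemma cnt_replicate {m : ℕ} (S : Finset (Fin m)) (c : ℕ) (w : Fin m → ZMod 2) :
    cnt S (Multiset.replicate c w) = if (∀ j ∈ S, w j = 1) then c else 0 := by
  split_ifs with h
  · rw [cnt, Multiset.filter_eq_self.mpr, Multiset.card_replicate]
    intro a ha
    rwa [Multiset.eq_of_mem_replicate ha]
  · rw [cnt, Multiset.filter_eq_nil.mpr, Multiset.card_zero]
    intro a ha
    rwa [Multiset.eq_of_mem_replicate ha]

lemma cnt_map {m n : ℕ} (S : Finset (Fin m)) (f : Fin n → (Fin m → ZMod 2)) :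
    cnt S (Multiset.map f Finset.univ.val) =
      (Finset.univ.filter fun i => ∀ j ∈ S, f i j = 1).card := by
  rw [cnt, Multiset.filter_map, Multiset.card_map]
  rfl

lemma choose_two_pow_mod (r N : ℕ) : N.choose (2 ^ r) ≡ N / 2 ^ r % 2 [MOD 2] := by
  induction r generalizing N with
  | zero =>
    simpa [Nat.choose_one_right] using (Nat.mod_modEq N 2).symm
  | succ r ih =>
    haveI : Fact (Nat.Prime 2) := ⟨Nat.prime_two⟩
    have h1 : (2:ℕ) ^ (r + 1) % 2 = 0 := by
      rw [pow_succ]; exact Nat.mul_mod_left _ _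
    have h2 : (2:ℕ) ^ (r + 1) / 2 = 2 ^ r := by
      rw [pow_succ]; exact Nat.mul_div_cancel _ (by norm_num)
    calc N.choose (2 ^ (r+1))
        ≡ (N % 2).choose (2 ^ (r+1) % 2) * (N / 2).choose (2 ^ (r+1) / 2) [MOD 2] :=
          Choose.choose_modEq_choose_mod_mul_choose_div_nat
      _ = (N / 2).choose (2 ^ r) := by rw [h1, h2, Nat.choose_zero_right, one_mul]
      _ ≡ (N / 2) / 2 ^ r % 2 [MOD 2] := ih _
      _ = N / 2 ^ (r+1) % 2 := by
          rw [Nat.div_div_eq_div_mul, ← pow_succ']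

lemma choose_two_pow_cast (r N : ℕ) :
    ((N.choose (2 ^ r) : ZMod 2)) = ((N / 2 ^ r % 2 : ℕ) : ZMod 2) :=
  (ZMod.natCast_eq_natCast_iff _ _ _).mpr (choose_two_pow_mod r N)

lemma bit_eq_of_choose_cast_eq {r N₁ N₂ : ℕ}
    (h : ((N₁.choose (2 ^ r) : ZMod 2)) = ((N₂.choose (2 ^ r) : ZMod 2))) :
    N₁ / 2 ^ r % 2 = N₂ / 2 ^ r % 2 := by
  rw [choose_two_pow_cast, choose_two_pow_cast] at h
  have h1 : N₁ / 2 ^ r % 2 < 2 := Nat.mod_lt _ (by norm_num)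
  have h2 : N₂ / 2 ^ r % 2 < 2 := Nat.mod_lt _ (by norm_num)
  calc N₁ / 2 ^ r % 2 = (((N₁ / 2 ^ r % 2 : ℕ) : ZMod 2)).val := (ZMod.val_cast_of_lt h1).symm
    _ = (((N₂ / 2 ^ r % 2 : ℕ) : ZMod 2)).val := by rw [h]
    _ = N₂ / 2 ^ r % 2 := ZMod.val_cast_of_lt h2

lemma modeq_of_bits {N₁ N₂ e : ℕ} (h : ∀ r, r < e → N₁ / 2 ^ r % 2 = N₂ / 2 ^ r % 2) :
    N₁ ≡ N₂ [MOD 2 ^ e] := by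
  have : N₁ % 2 ^ e = N₂ % 2 ^ e := by
    refine Nat.eq_of_testBit_eq fun i => ?_
    simp only [Nat.testBit_mod_two_pow]
    by_cases hi : i < e
    · simp [hi, Nat.testBit_eq_decide_div_mod_eq, h i hi]
    · simp [hi]
  exact this


lemma cnt_filter_insert {m : ℕ} (a : Fin m) (S : Finset (Fin m)) (ha : a ∉ S)
    (A : Multiset (Fin m → ZMod 2)) :
    cnt S (A.filter fun w => w a = 1) = cnt (insert a S) A := by
  rw [cnt, Multiset.filter_filter, cnt]
  apply congrArg
  apply Multiset.filter_congr
  intro w _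
  rw [Finset.forall_mem_insert]
  tauto

lemma key {m : ℕ} (K : Finset (Fin m)) : ∀ (E : ℕ) (A B : Multiset (Fin m → ZMod 2)),
    Multiset.card A = Multiset.card B → Multiset.card A < 2 ^ E →
    (∀ w₁ ∈ A + B, ∀ w₂ ∈ A + B, ∀ j, j ∉ K → w₁ j = w₂ j) →
    (∀ S : Finset (Fin m), S ⊆ K → S.Nonempty →
      cnt S A ≡ cnt S B [MOD 2 ^ (E + 1 - S.card)]) →
    A = B := by
  induction K using Finset.induction with
  | empty =>
    intro E A B hcard hlt hout _
    rcases Multiset.empty_or_exists_mem A with hA | ⟨w₀, hw₀⟩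
    · subst hA
      symm
      rw [← Multiset.card_eq_zero, ← hcard, Multiset.card_zero]
    · have h1 : A = Multiset.replicate (Multiset.card A) w₀ := by
        rw [Multiset.eq_replicate_card]
        intro b hb
        funext j
        exact hout b (Multiset.mem_add.mpr (Or.inl hb)) w₀
          (Multiset.mem_add.mpr (Or.inl hw₀)) j (Finset.notMem_empty j)
      have h2 : B = Multiset.replicate (Multiset.card B) w₀ := by
        rw [Multiset.eq_replicate_card]
        intro b hb
        funext j
        exact hout b (Multiset.mem_add.mpr (Or.inr hb)) w₀
          (Multiset.mem_add.mpr (Or.inl hw₀)) j (Finset.notMem_empty j)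
      rw [h1, h2, hcard]
  | @insert a K haK ih =>
    intro E A B hcard hlt hout hcong
    rcases Nat.eq_zero_or_pos E with rfl | hE
    · have : Multiset.card A = 0 := by omega
      have hB : Multiset.card B = 0 := by omega
      rw [Multiset.card_eq_zero] at this hB
      rw [this, hB]
    set A1 := A.filter (fun w => w a = 1) with hA1def
    set A0 := A.filter (fun w => ¬ w a = 1) with hA0def
    set B1 := B.filter (fun w => w a = 1) with hB1def
    set B0 := B.filter (fun w => ¬ w a = 1) with hB0def
    have hAsplit : A1 + A0 = A := Multiset.filter_add_not _ A
    have hBsplit : B1 + B0 = B := Multiset.filter_add_not _ B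
    -- membership transfer
    have hmemA1 : ∀ w ∈ A1, w ∈ A + B := fun w hw =>
      Multiset.mem_add.mpr (Or.inl (Multiset.mem_of_mem_filter hw))
    have hmemB1 : ∀ w ∈ B1, w ∈ A + B := fun w hw =>
      Multiset.mem_add.mpr (Or.inr (Multiset.mem_of_mem_filter hw))
    have hmemA0 : ∀ w ∈ A0, w ∈ A + B := fun w hw =>
      Multiset.mem_add.mpr (Or.inl (Multiset.mem_of_mem_filter hw))
    have hmemB0 : ∀ w ∈ B0, w ∈ A + B := fun w hw =>
      Multiset.mem_add.mpr (Or.inr (Multiset.mem_of_mem_filter hw))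
    -- outside condition for the sub-multisets
    have hout1 : ∀ w₁ ∈ A1 + B1, ∀ w₂ ∈ A1 + B1, ∀ j, j ∉ K → w₁ j = w₂ j := by
      intro w₁ h₁ w₂ h₂ j hj
      have h₁' : w₁ ∈ A + B := by
        rcases Multiset.mem_add.mp h₁ with h | h
        exacts [hmemA1 _ h, hmemB1 _ h]
      have h₂' : w₂ ∈ A + B := by
        rcases Multiset.mem_add.mp h₂ with h | h
        exacts [hmemA1 _ h, hmemB1 _ h]
      by_cases hja : j = a
      · subst hja
        have e₁ : w₁ j = 1 := by
          rcases Multiset.mem_add.mp h₁ with h | h <;>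
            exact (Multiset.mem_filter.mp h).2
        have e₂ : w₂ j = 1 := by
          rcases Multiset.mem_add.mp h₂ with h | h <;>
            exact (Multiset.mem_filter.mp h).2
        rw [e₁, e₂]
      · exact hout w₁ h₁' w₂ h₂' j (by simp [hja, hj])
    have hout0 : ∀ w₁ ∈ A0 + B0, ∀ w₂ ∈ A0 + B0, ∀ j, j ∉ K → w₁ j = w₂ j := by
      intro w₁ h₁ w₂ h₂ j hj
      have h₁' : w₁ ∈ A + B := by
        rcases Multiset.mem_add.mp h₁ with h | h
        exacts [hmemA0 _ h, hmemB0 _ h]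
      have h₂' : w₂ ∈ A + B := by
        rcases Multiset.mem_add.mp h₂ with h | h
        exacts [hmemA0 _ h, hmemB0 _ h]
      by_cases hja : j = a
      · subst hja
        have e₁ : w₁ j = 0 := by
          rcases Multiset.mem_add.mp h₁ with h | h <;>
            exact zmod2_eq_zero (Multiset.mem_filter.mp h).2
        have e₂ : w₂ j = 0 := by
          rcases Multiset.mem_add.mp h₂ with h | h <;>
            exact zmod2_eq_zero (Multiset.mem_filter.mp h).2
        rw [e₁, e₂]
      · exact hout w₁ h₁' w₂ h₂' j (by simp [hja, hj])
    -- cnt relations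
    have hcnt1A : ∀ S : Finset (Fin m), S ⊆ K → cnt S A1 = cnt (insert a S) A := by
      intro S hS
      exact cnt_filter_insert a S (fun h => haK (hS h)) A
    have hcnt1B : ∀ S : Finset (Fin m), S ⊆ K → cnt S B1 = cnt (insert a S) B := by
      intro S hS
      exact cnt_filter_insert a S (fun h => haK (hS h)) B
    have hsplitcntA : ∀ S : Finset (Fin m), cnt S A = cnt S A1 + cnt S A0 := by
      intro S
      conv_lhs => rw [← hAsplit]
      simp [cnt, Multiset.filter_add]
    have hsplitcntB : ∀ S : Finset (Fin m), cnt S B = cnt S B1 + cnt S B0 := by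
      intro S
      conv_lhs => rw [← hBsplit]
      simp [cnt, Multiset.filter_add]
    -- the congruence for the sub-multiset with coordinate a equal one
    have hcong1 : ∀ S : Finset (Fin m), S ⊆ K → S.Nonempty →
        cnt S A1 ≡ cnt S B1 [MOD 2 ^ (E - 1 + 1 - S.card)] := by
      intro S hS hSne
      have haS : a ∉ S := fun h => haK (hS h)
      have h := hcong (insert a S) (Finset.insert_subset_insert a hS)
        (Finset.insert_nonempty a S)
      rw [Finset.card_insert_of_notMem haS] at h
      rw [hcnt1A S hS, hcnt1B S hS]
      have : E + 1 - (S.card + 1) = E - 1 + 1 - S.card := by omega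
      rwa [this] at h
    -- card A1 = card B1 exactly
    have hcA1 : Multiset.card A1 = cnt {a} A := by
      rw [hA1def, cnt]
      apply congrArg
      apply Multiset.filter_congr
      intro w _
      simp
    have hcB1 : Multiset.card B1 = cnt {a} B := by
      rw [hB1def, cnt]
      apply congrArg
      apply Multiset.filter_congr
      intro w _
      simp
    have hc1 : cnt {a} A = cnt {a} B := by
      have h := hcong {a} (by simp) ⟨a, by simp⟩
      rw [Finset.card_singleton] at h
      have hEe : E + 1 - 1 = E := by omega
      rw [hEe] at h
      have hA' : cnt {a} A < 2 ^ E := lt_of_le_of_lt (cnt_le_card _ _) hlt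
      have hB' : cnt {a} B < 2 ^ E := lt_of_le_of_lt (cnt_le_card _ _) (hcard ▸ hlt)
      unfold Nat.ModEq at h
      rwa [Nat.mod_eq_of_lt hA', Nat.mod_eq_of_lt hB'] at h
    have hcardA1B1 : Multiset.card A1 = Multiset.card B1 := by rw [hcA1, hcB1, hc1]
    have hsumA : Multiset.card A1 + Multiset.card A0 = Multiset.card A := by
      rw [← hAsplit]; simp
    have hsumB : Multiset.card B1 + Multiset.card B0 = Multiset.card B := by
      rw [← hBsplit]; simp
    have hcardA0B0 : Multiset.card A0 = Multiset.card B0 := by omega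
    have hpow : (2:ℕ) ^ E = 2 ^ (E - 1) * 2 := by
      rw [← pow_succ]
      congr 1
      omega
    by_cases hsmall : Multiset.card A1 < 2 ^ (E - 1)
    · have hA1B1 : A1 = B1 := ih (E - 1) A1 B1 hcardA1B1 hsmall hout1 hcong1
      have hcong0 : ∀ S : Finset (Fin m), S ⊆ K → S.Nonempty →
          cnt S A0 ≡ cnt S B0 [MOD 2 ^ (E + 1 - S.card)] := by
        intro S hS hSne
        have h := hcong S (hS.trans (Finset.subset_insert a K)) hSne
        rw [hsplitcntA S, hsplitcntB S, hA1B1] at h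
        exact Nat.ModEq.add_left_cancel' _ h
      have hA0B0 : A0 = B0 := by
        refine ih E A0 B0 hcardA0B0 (lt_of_le_of_lt ?_ hlt) hout0 hcong0
        omega
      rw [← hAsplit, ← hBsplit, hA1B1, hA0B0]
    · have hA0small : Multiset.card A0 < 2 ^ (E - 1) := by omega
      have hcong0 : ∀ S : Finset (Fin m), S ⊆ K → S.Nonempty →
          cnt S A0 ≡ cnt S B0 [MOD 2 ^ (E - 1 + 1 - S.card)] := by
        intro S hS hSne
        have h := hcong S (hS.trans (Finset.subset_insert a K)) hSne
        have h' : cnt S A ≡ cnt S B [MOD 2 ^ (E - 1 + 1 - S.card)] :=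
          Nat.ModEq.of_dvd (pow_dvd_pow 2 (by omega)) h
        rw [hsplitcntA S, hsplitcntB S] at h'
        exact Nat.ModEq.add_left_cancel (hcong1 S hS hSne) h'
      have hA0B0 : A0 = B0 := ih (E - 1) A0 B0 hcardA0B0 hA0small hout0 hcong0
      have hcong1' : ∀ S : Finset (Fin m), S ⊆ K → S.Nonempty →
          cnt S A1 ≡ cnt S B1 [MOD 2 ^ (E + 1 - S.card)] := by
        intro S hS hSne
        have h := hcong S (hS.trans (Finset.subset_insert a K)) hSne
        rw [hsplitcntA S, hsplitcntB S, hA0B0] at h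
        exact Nat.ModEq.add_right_cancel' _ h
      have hA1B1 : A1 = B1 := by
        refine ih E A1 B1 hcardA1B1 (lt_of_le_of_lt ?_ hlt) hout1 hcong1'
        omega
      rw [← hAsplit, ← hBsplit, hA1B1, hA0B0]

lemma eval_msym {n m : ℕ} (u : Fin m × Fin n → ZMod 2) (t : ℕ) (α : Fin m → ℕ)
    (hα : ∀ j, α j ≤ 1) :
    eval u (msym n m t α : MvPolynomial (Fin m × Fin n) (ZMod 2)) =
      (((Finset.univ.filter fun i : Fin n =>
        ∀ j ∈ (Finset.univ.filter fun j => α j = 1), u (j, i) = 1).card).choose t : ZMod 2) := by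
  set S0 := Finset.univ.filter fun j : Fin m => α j = 1 with hS0
  set G := Finset.univ.filter fun i : Fin n => ∀ j ∈ S0, u (j, i) = 1 with hG
  have hc : ∀ i : Fin n, (∏ j, (u (j, i)) ^ α j) = if i ∈ G then 1 else 0 := by
    intro i
    split_ifs with h
    · apply Finset.prod_eq_one
      intro j _
      rcases Nat.le_one_iff_eq_zero_or_eq_one.mp (hα j) with h0 | h1
      · rw [h0, pow_zero]
      · rw [h1, pow_one]
        exact (Finset.mem_filter.mp h).2 j (Finset.mem_filter.mpr ⟨Finset.mem_univ _, h1⟩)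
    · rw [hG, Finset.mem_filter] at h
      push_neg at h
      obtain ⟨j, hj, hj2⟩ := h (Finset.mem_univ i)
      refine Finset.prod_eq_zero (Finset.mem_univ j) ?_
      rw [(Finset.mem_filter.mp hj).2, pow_one]
      exact zmod2_eq_zero hj2
  have heval : eval u (msym n m t α : MvPolynomial (Fin m × Fin n) (ZMod 2)) =
      ∑ s ∈ Finset.powersetCard t (Finset.univ : Finset (Fin n)),
        ∏ i ∈ s, ∏ j, (u (j, i)) ^ α j := by
    rw [msym, map_sum]
    refine Finset.sum_congr rfl fun s _ => ?_
    rw [map_prod]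
    refine Finset.prod_congr rfl fun i _ => ?_
    rw [map_prod]
    refine Finset.prod_congr rfl fun j _ => ?_
    rw [map_pow, eval_X]
  rw [heval]
  have hprod : ∀ s ∈ Finset.powersetCard t (Finset.univ : Finset (Fin n)),
      (∏ i ∈ s, ∏ j, (u (j, i)) ^ α j) = if s ⊆ G then (1 : ZMod 2) else 0 := by
    intro s _
    split_ifs with h
    · apply Finset.prod_eq_one
      intro i hi
      rw [hc i, if_pos (h hi)]
    · rw [Finset.not_subset] at h
      obtain ⟨i, hi, hiG⟩ := h
      refine Finset.prod_eq_zero hi ?_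
      rw [hc i, if_neg hiG]
  rw [Finset.sum_congr rfl hprod, Finset.sum_boole]
  have : (Finset.powersetCard t (Finset.univ : Finset (Fin n))).filter (fun s => s ⊆ G) =
      G.powersetCard t := by
    ext s
    simp only [Finset.mem_filter, Finset.mem_powersetCard]
    constructor
    · rintro ⟨⟨_, hcard⟩, hsub⟩
      exact ⟨hsub, hcard⟩
    · rintro ⟨hsub, hcard⟩
      exact ⟨⟨Finset.subset_univ s, hcard⟩, hsub⟩
  rw [this, Finset.card_powersetCard]

lemma perm_of_multiset_eq {n : ℕ} {β : Type*} [DecidableEq β] {f g : Fin n → β}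
    (h : Multiset.map f Finset.univ.val = Multiset.map g Finset.univ.val) :
    ∃ σ : Equiv.Perm (Fin n), ∀ i, f (σ i) = g i := by
  have hcard : ∀ c : β, Fintype.card { i // g i = c } = Fintype.card { i // f i = c } := by
    intro c
    rw [Fintype.card_subtype, Fintype.card_subtype]
    have h1 : ∀ f' : Fin n → β, (Finset.univ.filter fun i => f' i = c).card =
        Multiset.count c (Multiset.map f' Finset.univ.val) := by
      intro f'
      rw [Multiset.count_map]
      rw [Finset.card_def, Finset.filter_val]
      apply congrArg
      apply Multiset.filter_congr
      intro i _
      exact eq_comm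
    rw [h1, h1, h]
  refine ⟨Equiv.ofFiberEquiv (f := g) (g := f)
    (fun c => Fintype.equivOfCardEq (hcard c)), ?_⟩
  intro i
  exact Equiv.ofFiberEquiv_map _ i


lemma sep (n m : ℕ) (hn : 2 ≤ n) : IsSepMulti n m (Snm n m) := by
  intro u v hne
  by_contra hcon
  push_neg at hcon
  set L := Nat.log 2 n with hL
  set colU : Fin n → (Fin m → ZMod 2) := fun i j => u (j, i) with hcolU
  set colV : Fin n → (Fin m → ZMod 2) := fun i j => v (j, i) with hcolV
  set A := Multiset.map colU Finset.univ.val with hA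
  set B := Multiset.map colV Finset.univ.val with hB
  have hcardA : Multiset.card A = n := by simp [hA]
  have hcardB : Multiset.card B = n := by simp [hB]
  have hAB : A = B := by
    apply key Finset.univ (L + 1) A B (by rw [hcardA, hcardB])
    · rw [hcardA]
      exact Nat.lt_pow_succ_log_self (by norm_num) n
    · intro w₁ _ w₂ _ j hj
      exact absurd (Finset.mem_univ j) hj
    · intro S _ hSne
      apply modeq_of_bits
      intro r hr
      have hk1 : 1 ≤ S.card := hSne.card_pos
      set α : Fin m → ℕ := fun j => if j ∈ S then 1 else 0 with hαdef
      have hα : ∀ j, α j ≤ 1 := by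
        intro j
        dsimp [α]
        split <;> omega
      have hsum : ∑ j, α j = S.card := by
        dsimp [α]
        rw [Finset.sum_ite_mem, Finset.univ_inter, Finset.sum_const, smul_eq_mul, mul_one]
      have hS0 : (Finset.univ.filter fun j => α j = 1) = S := by
        ext j
        simp [α]
      have hmem : msym n m (2 ^ r) α ∈ Snm n m := by
        refine ⟨r, α, hα, by omega, by omega, rfl⟩
      have hev := hcon _ hmem
      rw [eval_msym u _ _ hα, eval_msym v _ _ hα, hS0] at hev
      have hbit := bit_eq_of_choose_cast_eq hev
      rw [hA, hB, cnt_map, cnt_map]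
      exact hbit
  obtain ⟨σ, hσ⟩ := perm_of_multiset_eq (f := colU) (g := colV) hAB
  apply hne
  refine ⟨σ, fun p => ?_⟩
  have := congrFun (hσ p.2) p.1
  simpa using this

lemma card_finsum {ι : Type*} {m : ℕ} (s : Finset ι) (f : ι → Multiset (Fin m → ZMod 2)) :
    Multiset.card (∑ i ∈ s, f i) = ∑ i ∈ s, Multiset.card (f i) := by
  induction s using Finset.cons_induction with
  | empty => simp
  | cons a s ha ih => simp [Finset.sum_cons, ih]

lemma cnt_finsum {ι : Type*} {m : ℕ} (S : Finset (Fin m)) (s : Finset ι)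
    (f : ι → Multiset (Fin m → ZMod 2)) :
    cnt S (∑ i ∈ s, f i) = ∑ i ∈ s, cnt S (f i) := by
  induction s using Finset.cons_induction with
  | empty => simp [cnt]
  | cons a s ha ih => simp [Finset.sum_cons, cnt_add, ih]

lemma even_odd_card {m : ℕ} {S S0 : Finset (Fin m)} (hS : S ⊆ S0) (hne : S ≠ S0) :
    (S0.powerset.filter fun T => S ⊆ T ∧ (S0.card - T.card) % 2 = 0).card =
    (S0.powerset.filter fun T => S ⊆ T ∧ (S0.card - T.card) % 2 = 1).card := by
  obtain ⟨x, hxS0, hxS⟩ := Finset.exists_of_ssubset (hS.ssubset_of_ne hne)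
  have hmap : ∀ par : ℕ, ∀ T ∈ (S0.powerset.filter fun T => S ⊆ T ∧ (S0.card - T.card) % 2 = par),
      (if x ∈ T then T.erase x else insert x T) ∈
      (S0.powerset.filter fun T => S ⊆ T ∧ (S0.card - T.card) % 2 = (1 - par)) ∧
      (if x ∈ (if x ∈ T then T.erase x else insert x T) then
        (if x ∈ T then T.erase x else insert x T).erase x
        else insert x (if x ∈ T then T.erase x else insert x T)) = T := by
    intro par T hT
    rw [Finset.mem_filter, Finset.mem_powerset] at hT
    obtain ⟨hTS0, hST, hpar⟩ := hT
    have hcle : T.card ≤ S0.card := Finset.card_le_card hTS0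
    by_cases hx : x ∈ T
    · rw [if_pos hx]
      have hce : (T.erase x).card = T.card - 1 := Finset.card_erase_of_mem hx
      have hc1 : 1 ≤ T.card := Finset.card_pos.mpr ⟨x, hx⟩
      constructor
      · rw [Finset.mem_filter, Finset.mem_powerset]
        refine ⟨(Finset.erase_subset x T).trans hTS0,
          Finset.subset_erase.mpr ⟨hST, hxS⟩, ?_⟩
        rw [hce]
        omega
      · rw [if_neg (Finset.notMem_erase x T), Finset.insert_erase hx]
    · rw [if_neg hx]
      have hlt : T.card < S0.card :=
        Finset.card_lt_card ⟨hTS0, fun hsub => hx (hsub hxS0)⟩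
      constructor
      · rw [Finset.mem_filter, Finset.mem_powerset]
        refine ⟨Finset.insert_subset hxS0 hTS0,
          hST.trans (Finset.subset_insert x T), ?_⟩
        rw [Finset.card_insert_of_notMem hx]
        omega
      · rw [if_pos (Finset.mem_insert_self x T), Finset.erase_insert hx]
  refine Finset.card_bij' (fun T _ => if x ∈ T then T.erase x else insert x T)
    (fun T _ => if x ∈ T then T.erase x else insert x T)
    (fun T hT => by simpa using (hmap 0 T hT).1)
    (fun T hT => by simpa using (hmap 1 T hT).1)
    (fun T hT => (hmap 0 T hT).2)
    (fun T hT => (hmap 1 T hT).2)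

lemma exists_fun {β : Type*} (n : ℕ) (M : Multiset β) (h : Multiset.card M = n) :
    ∃ f : Fin n → β, Multiset.map f Finset.univ.val = M := by
  have hlen : M.toList.length = n := by rw [Multiset.length_toList, h]
  refine ⟨fun i => M.toList.get (Fin.cast hlen.symm i), ?_⟩
  rw [Fin.univ_val_map]
  conv_rhs => rw [← Multiset.coe_toList M]
  apply congrArg
  apply List.ext_get (by simp [hlen])
  intro i h1 h2
  simp [List.get_ofFn]

lemma pow_div_mod_two {a b : ℕ} (hne : a ≠ b) : 2 ^ a / 2 ^ b % 2 = 0 := by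
  rcases lt_or_gt_of_ne hne with h | h
  · rw [Nat.div_eq_of_lt (Nat.pow_lt_pow_right one_lt_two h)]
  · rw [Nat.pow_div h.le (by norm_num)]
    have h1 : a - b = (a - b - 1) + 1 := by omega
    rw [h1, pow_succ]
    exact Nat.mul_mod_left _ _


lemma sum_eq_card {m : ℕ} (α : Fin m → ℕ) (hα : ∀ j, α j ≤ 1) :
    ∑ j, α j = (Finset.univ.filter fun j => α j = 1).card := by
  rw [Finset.card_filter]
  refine Finset.sum_congr rfl fun j _ => ?_
  have := hα j
  split <;> omega

lemma not_sep_pair (n m : ℕ) (hn : 2 ≤ n) (r : ℕ) (α : Fin m → ℕ) (hα : ∀ j, α j ≤ 1)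
    (hsum : 1 ≤ ∑ j, α j) (hle : r + (∑ j, α j) - 1 ≤ Nat.log 2 n) :
    ∃ u v : Fin m × Fin n → ZMod 2,
      (¬ ∃ σ : Equiv.Perm (Fin n), ∀ p : Fin m × Fin n, u (p.1, σ p.2) = v p) ∧
      ∀ g ∈ Snm n m, g ≠ msym n m (2 ^ r) α → eval u g = eval v g := by
  classical
  set L := Nat.log 2 n with hL
  set S0 := Finset.univ.filter (fun j : Fin m => α j = 1) with hS0def
  set k := S0.card with hk
  have hsumk : ∑ j, α j = k := sum_eq_card α hα
  have hk1 : 1 ≤ k := by omega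
  have hS0ne : S0.Nonempty := Finset.card_pos.mp (by omega)
  have hrk : r + k - 1 ≤ L := by omega
  set Pe := S0.powerset.filter (fun T => (S0.card - T.card) % 2 = 0) with hPedef
  set Po := S0.powerset.filter (fun T => (S0.card - T.card) % 2 = 1) with hPodef
  set ind : Finset (Fin m) → (Fin m → ZMod 2) := fun T j => if j ∈ T then 1 else 0 with hind
  have hfilPe : ∀ S : Finset (Fin m), Pe.filter (fun T => S ⊆ T) =
      S0.powerset.filter (fun T => S ⊆ T ∧ (S0.card - T.card) % 2 = 0) := by
    intro S
    rw [hPedef, Finset.filter_filter]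
    exact Finset.filter_congr fun T _ => by tauto
  have hfilPo : ∀ S : Finset (Fin m), Po.filter (fun T => S ⊆ T) =
      S0.powerset.filter (fun T => S ⊆ T ∧ (S0.card - T.card) % 2 = 1) := by
    intro S
    rw [hPodef, Finset.filter_filter]
    exact Finset.filter_congr fun T _ => by tauto
  have hEOcard : ∀ S : Finset (Fin m), S ⊆ S0 → S ≠ S0 →
      (Pe.filter (fun T => S ⊆ T)).card = (Po.filter (fun T => S ⊆ T)).card := by
    intro S h1 h2
    rw [hfilPe, hfilPo]
    exact even_odd_card h1 h2
  have hPeeq : Pe.filter (fun T => (∅ : Finset (Fin m)) ⊆ T) = Pe :=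
    Finset.filter_true_of_mem fun x _ => Finset.empty_subset x
  have hPoeq : Po.filter (fun T => (∅ : Finset (Fin m)) ⊆ T) = Po :=
    Finset.filter_true_of_mem fun x _ => Finset.empty_subset x
  have hequal : Pe.card = Po.card := by
    have h3 := hEOcard ∅ (Finset.empty_subset S0) (fun h => hS0ne.ne_empty h.symm)
    rwa [hPeeq, hPoeq] at h3
  have hsumcard : Pe.card + Po.card = 2 ^ k := by
    have h5 : Po = S0.powerset.filter (fun T => ¬ (S0.card - T.card) % 2 = 0) := by
      rw [hPodef]
      exact Finset.filter_congr fun T _ => by constructor <;> omega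
    rw [hPedef, h5, Finset.card_filter_add_card_filter_not, Finset.card_powerset]
  have hpowk : (2:ℕ) ^ k = 2 ^ (k - 1) * 2 := by
    rw [← pow_succ]
    congr 1
    omega
  have hPeCard : Pe.card = 2 ^ (k - 1) := by omega
  have hmul : 2 ^ r * 2 ^ (k - 1) = 2 ^ (r + k - 1) := by
    rw [← pow_add]
    congr 1
    omega
  have hple : 2 ^ r * 2 ^ (k - 1) ≤ n := by
    rw [hmul]
    calc (2:ℕ) ^ (r + k - 1) ≤ 2 ^ L := Nat.pow_le_pow_right (by norm_num) hrk
      _ ≤ n := Nat.pow_log_le_self 2 (by omega)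
  set pad := n - 2 ^ r * 2 ^ (k - 1) with hpad
  set MA := Multiset.replicate pad (ind ∅) + ∑ T ∈ Pe, Multiset.replicate (2 ^ r) (ind T)
    with hMA
  set MB := Multiset.replicate pad (ind ∅) + ∑ T ∈ Po, Multiset.replicate (2 ^ r) (ind T)
    with hMB
  have hcardsum : ∀ P : Finset (Finset (Fin m)),
      Multiset.card (∑ T ∈ P, Multiset.replicate (2 ^ r) (ind T)) = P.card * 2 ^ r := by
    intro P
    rw [card_finsum]
    simp [Multiset.card_replicate, Finset.sum_const]
  have hcardMA : Multiset.card MA = n := by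
    rw [hMA, Multiset.card_add, Multiset.card_replicate, hcardsum, hPeCard]
    have h6 : 2 ^ (k - 1) * 2 ^ r = 2 ^ r * 2 ^ (k - 1) := mul_comm _ _
    omega
  have hcardMB : Multiset.card MB = n := by
    rw [hMB, Multiset.card_add, Multiset.card_replicate, hcardsum, ← hequal, hPeCard]
    have h6 : 2 ^ (k - 1) * 2 ^ r = 2 ^ r * 2 ^ (k - 1) := mul_comm _ _
    omega
  have hcntsum : ∀ (S : Finset (Fin m)), S.Nonempty → ∀ P : Finset (Finset (Fin m)),
      cnt S (Multiset.replicate pad (ind ∅) + ∑ T ∈ P, Multiset.replicate (2 ^ r) (ind T)) =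
        2 ^ r * (P.filter (fun T => S ⊆ T)).card := by
    intro S hSne P
    rw [cnt_add, cnt_replicate, if_neg, cnt_finsum, zero_add]
    · have h7 : ∀ T ∈ P, cnt S (Multiset.replicate (2 ^ r) (ind T)) =
          if S ⊆ T then 2 ^ r else 0 := by
        intro T _
        rw [cnt_replicate]
        refine if_congr ?_ rfl rfl
        constructor
        · intro h j hj
          have h8 := h j hj
          by_contra hjT
          simp [hind, hjT] at h8
        · intro h j hj
          simp [hind, h hj]
      rw [Finset.sum_congr rfl h7, ← Finset.sum_filter, Finset.sum_const, smul_eq_mul, mul_comm]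
    · obtain ⟨j, hj⟩ := hSne
      intro h
      have h9 := h j hj
      simp [hind] at h9
  have hcntMA : ∀ S : Finset (Fin m), S.Nonempty →
      cnt S MA = 2 ^ r * (Pe.filter (fun T => S ⊆ T)).card := fun S h => hcntsum S h Pe
  have hcntMB : ∀ S : Finset (Fin m), S.Nonempty →
      cnt S MB = 2 ^ r * (Po.filter (fun T => S ⊆ T)).card := fun S h => hcntsum S h Po
  have hA0 : cnt S0 MA = 2 ^ r := by
    rw [hcntMA S0 hS0ne]
    have h10 : Pe.filter (fun T => S0 ⊆ T) = {S0} := by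
      ext T
      rw [Finset.mem_filter, hPedef, Finset.mem_filter, Finset.mem_powerset,
        Finset.mem_singleton]
      constructor
      · rintro ⟨⟨h1, _⟩, h2⟩
        exact Finset.Subset.antisymm h1 h2
      · rintro rfl
        exact ⟨⟨Finset.Subset.refl _, by simp⟩, Finset.Subset.refl _⟩
    rw [h10, Finset.card_singleton, mul_one]
  have hB0 : cnt S0 MB = 0 := by
    rw [hcntMB S0 hS0ne]
    have h11 : Po.filter (fun T => S0 ⊆ T) = ∅ := by
      rw [Finset.filter_eq_empty_iff]
      intro T hT hST
      rw [hPodef, Finset.mem_filter, Finset.mem_powerset] at hT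
      have h12 : T = S0 := Finset.Subset.antisymm hT.1 hST
      rw [h12] at hT
      omega
    rw [h11, Finset.card_empty, mul_zero]
  obtain ⟨fu, hfu⟩ := exists_fun n MA hcardMA
  obtain ⟨fv, hfv⟩ := exists_fun n MB hcardMB
  refine ⟨fun p => fu p.2 p.1, fun p => fv p.2 p.1, ?_, ?_⟩
  · rintro ⟨σ, hσ⟩
    have hMBA : MB = MA := by
      rw [← hfu, ← hfv]
      have h1 : fv = fun i => fu (σ i) := by
        funext i j
        exact (hσ (j, i)).symm
      rw [h1]
      have h2 : Multiset.map (fun i => fu (σ i)) Finset.univ.val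
          = Multiset.map fu (Multiset.map (⇑σ) Finset.univ.val) := by
        rw [Multiset.map_map]
        rfl
      rw [h2]
      apply congrArg
      have h4 : Multiset.map (⇑σ) Finset.univ.val
          = (Finset.map σ.toEmbedding Finset.univ).val := by
        rw [Finset.map_val]
        rfl
      rw [h4, Finset.map_univ_equiv]
    have hpos : 0 < 2 ^ r := pow_pos (by norm_num) r
    rw [hMBA, hA0] at hB0
    omega
  · intro g hg hgne
    obtain ⟨r', α', hα', hsum', hle', rfl⟩ := hg
    rw [eval_msym _ _ _ hα', eval_msym _ _ _ hα']
    set S' := Finset.univ.filter (fun j : Fin m => α' j = 1) with hS'def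
    have hS'ne : S'.Nonempty := by
      apply Finset.card_pos.mp
      rw [hS'def]
      have h := sum_eq_card α' hα'
      omega
    have hbrU : (Finset.univ.filter fun i : Fin n =>
        ∀ j ∈ S', (fun p : Fin m × Fin n => fu p.2 p.1) (j, i) = 1).card = cnt S' MA := by
      rw [← hfu, cnt_map]
    have hbrV : (Finset.univ.filter fun i : Fin n =>
        ∀ j ∈ S', (fun p : Fin m × Fin n => fv p.2 p.1) (j, i) = 1).card = cnt S' MB := by
      rw [← hfv, cnt_map]
    rw [hbrU, hbrV]
    by_cases hSS : S' = S0
    · have hαα : α' = α := by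
        funext j
        have h1 := hα j
        have h2 := hα' j
        have h3 : (α' j = 1) ↔ (α j = 1) := by
          constructor <;> intro h
          · have h4 : j ∈ S' := Finset.mem_filter.mpr ⟨Finset.mem_univ _, h⟩
            rw [hSS, hS0def, Finset.mem_filter] at h4
            exact h4.2
          · have h4 : j ∈ S0 := Finset.mem_filter.mpr ⟨Finset.mem_univ _, h⟩
            rw [← hSS, hS'def, Finset.mem_filter] at h4
            exact h4.2
        omega
      have hr' : r' ≠ r := by
        intro h
        exact hgne (by rw [h, hαα])
      rw [hSS, hA0, hB0]
      rw [choose_two_pow_cast r' (2 ^ r), pow_div_mod_two (Ne.symm hr'),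
        Nat.choose_eq_zero_of_lt (pow_pos (by norm_num) r')]
    · rw [hcntMA S' hS'ne, hcntMB S' hS'ne]
      by_cases hsub : S' ⊆ S0
      · rw [hEOcard S' hsub hSS]
      · have h1 : Pe.filter (fun T => S' ⊆ T) = ∅ := by
          rw [Finset.filter_eq_empty_iff]
          intro T hT hST
          rw [hPedef, Finset.mem_filter, Finset.mem_powerset] at hT
          exact hsub (hST.trans hT.1)
        have h2 : Po.filter (fun T => S' ⊆ T) = ∅ := by
          rw [Finset.filter_eq_empty_iff]
          intro T hT hST
          rw [hPodef, Finset.mem_filter, Finset.mem_powerset] at hT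
          exact hsub (hST.trans hT.1)
        rw [h1, h2]

end S17

/-- for `F = F_2`, `m ≥ 1` and `n ≥ 2`, the set `S_{n,m}` is a separating
set for `F_2[V^m]^{S_n}` which is minimal with respect to inclusion. -/
theorem stmt17 (n m : ℕ) (hm : 1 ≤ m) (hn : 2 ≤ n) :
    IsSepMulti n m (Snm n m) ∧ ∀ T ⊂ Snm n m, ¬ IsSepMulti n m T := by
  constructor
  · exact S17.sep n m hn
  · intro T hT hsep
    obtain ⟨f0, hf0S, hf0T⟩ := Set.exists_of_ssubset hT
    obtain ⟨r, α, hα, hsum, hle, hf0⟩ := hf0S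
    obtain ⟨u, v, hne, hagree⟩ := S17.not_sep_pair n m hn r α hα hsum hle
    obtain ⟨g, hgT, hgne⟩ := hsep u v hne
    exact hgne (hagree g (hT.subset hgT) (fun h => hf0T (by rw [hf0, ← h]; exact hgT)))
end

section
/- For F = F_2, m ≥ 1 and n ≥ 2, the separating degree bound of the multisymmetric invariant ring is β_sep(F_2[V^m]^{S_n}) = 2^{⌊log_2(n)⌋}; that is, the homogeneous invariants of total degree at most 2^{⌊log_2(n)⌋} separate the S_n-orbits on V^m, and no smaller degree bound suffices. -/
open MvPolynomial

/-- The set of all `S_n`-invariant homogeneous polynomials of total degree at most `d`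
in `F_2[V^m]`. -/
def HomInvMulti (n m d : ℕ) : Set (MvPolynomial (Fin m × Fin n) (ZMod 2)) :=
  {f | (∀ σ : Equiv.Perm (Fin n),
          rename (fun p : Fin m × Fin n => (p.1, σ p.2)) f = f) ∧
       ∃ e ≤ d, f.IsHomogeneous e}


open Finset

lemma zmod2_cases (x : ZMod 2) : x = 0 ∨ x = 1 := by revert x; decide
lemma zmod2_ne_zero {x : ZMod 2} (h : x ≠ 0) : x = 1 := by rcases zmod2_cases x with h'|h' <;> simp_all
lemma zmod2_ne_one {x : ZMod 2} (h : x ≠ 1) : x = 0 := by rcases zmod2_cases x with h'|h' <;> simp_all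

lemma choose_two_pow_mod (M b : ℕ) : Nat.choose M (2 ^ b) % 2 = M / 2 ^ b % 2 := by
  induction b generalizing M with
  | zero => simp [Nat.choose_one_right]
  | succ b ih =>
    haveI : Fact (Nat.Prime 2) := ⟨Nat.prime_two⟩
    have h := @Choose.choose_modEq_choose_mod_mul_choose_div_nat M (2 ^ (b+1)) 2 _
    have h1 : 2 ^ (b+1) % 2 = 0 := by simp [pow_succ, Nat.mul_mod_left]
    have h2 : 2 ^ (b+1) / 2 = 2 ^ b := by rw [pow_succ, Nat.mul_div_cancel _ two_pos]
    rw [h1, h2, Nat.choose_zero_right, one_mul] at h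
    unfold Nat.ModEq at h
    rw [h, ih (M / 2), Nat.div_div_eq_div_mul, mul_comm, ← pow_succ]

lemma exists_pow_choose_ne {n M M' : ℕ} (hM : M ≤ n) (hM' : M' ≤ n) (hne : M ≠ M') :
    ∃ b ≤ Nat.log 2 n, (Nat.choose M (2 ^ b) : ZMod 2) ≠ (Nat.choose M' (2 ^ b) : ZMod 2) := by
  by_contra hc
  push_neg at hc
  apply hne
  apply Nat.eq_of_testBit_eq
  intro b
  rcases le_or_gt b (Nat.log 2 n) with hb | hb
  · have := hc b hb
    rw [ZMod.natCast_eq_natCast_iff'] at this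
    rw [choose_two_pow_mod, choose_two_pow_mod] at this
    simp [Nat.testBit_eq_decide_div_mod_eq, this]
  · have h2 : 1 < 2 := one_lt_two
    have hn1 : M < 2 ^ b := lt_of_le_of_lt hM (lt_of_lt_of_le (Nat.lt_pow_succ_log_self h2 n) (Nat.pow_le_pow_right (by norm_num) hb))
    have hn2 : M' < 2 ^ b := lt_of_le_of_lt hM' (lt_of_lt_of_le (Nat.lt_pow_succ_log_self h2 n) (Nat.pow_le_pow_right (by norm_num) hb))
    rw [Nat.testBit_lt_two_pow hn1, Nat.testBit_lt_two_pow hn2]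

/-- elementary symmetric sum of 0/1 values equals a binomial coefficient mod 2 -/
lemma esym_eval_eq_choose {n k : ℕ} (a : Fin n → ZMod 2) :
    ∑ K ∈ powersetCard k (univ : Finset (Fin n)), ∏ i ∈ K, a i
      = (Nat.choose (univ.filter (fun i => a i = 1)).card k : ZMod 2) := by
  set A := univ.filter (fun i => a i = 1) with hA
  have key : ∀ K ∈ powersetCard k (univ : Finset (Fin n)),
      (∏ i ∈ K, a i) = if K ⊆ A then 1 else 0 := by
    intro K _
    split_ifs with h
    · exact Finset.prod_eq_one fun i hi => by
        have := h hi; rw [hA, mem_filter] at this; exact this.2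
    · obtain ⟨i, hiK, hiA⟩ := Finset.not_subset.mp h
      refine Finset.prod_eq_zero hiK ?_
      apply zmod2_ne_one
      intro h1; exact hiA (by rw [hA, mem_filter]; exact ⟨mem_univ i, h1⟩)
  rw [Finset.sum_congr rfl key, Finset.sum_boole]
  congr 1
  rw [← Finset.card_powersetCard]
  congr 1
  ext K
  simp only [mem_filter, mem_powersetCard]
  exact ⟨fun h => ⟨h.2, h.1.2⟩, fun h => ⟨⟨fun x _ => mem_univ x, h.2⟩, h.1⟩⟩

section Esym
variable {n m : ℕ}

/-- the linear form attached to `w : Fin m → ZMod 2` in column `i` -/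
noncomputable def linW (w : Fin m → ZMod 2) (i : Fin n) : MvPolynomial (Fin m × Fin n) (ZMod 2) :=
  ∑ j, C (w j) * X (j, i)

/-- elementary symmetric polynomial in the linear forms -/
noncomputable def esymW (w : Fin m → ZMod 2) (k : ℕ) : MvPolynomial (Fin m × Fin n) (ZMod 2) :=
  ∑ K ∈ powersetCard k (univ : Finset (Fin n)), ∏ i ∈ K, linW w i

lemma linW_rename (w : Fin m → ZMod 2) (σ : Equiv.Perm (Fin n)) (i : Fin n) :
    rename (fun p : Fin m × Fin n => (p.1, σ p.2)) (linW w i) = linW w (σ i) := by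
  simp [linW, map_sum]

lemma linW_homogeneous (w : Fin m → ZMod 2) (i : Fin n) : (linW (n := n) w i).IsHomogeneous 1 :=
  IsHomogeneous.sum _ _ _ fun j _ => (isHomogeneous_X _ _).C_mul _

lemma esymW_homogeneous (w : Fin m → ZMod 2) (k : ℕ) : (esymW (n := n) w k).IsHomogeneous k :=
  IsHomogeneous.sum _ _ _ fun K hK => by
    have : (∏ i ∈ K, linW (n := n) w i).IsHomogeneous (∑ i ∈ K, 1) :=
      IsHomogeneous.prod _ _ _ fun i _ => linW_homogeneous w i
    simpa [(mem_powersetCard.mp hK).2] using this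

lemma esymW_invariant (w : Fin m → ZMod 2) (k : ℕ) (σ : Equiv.Perm (Fin n)) :
    rename (fun p : Fin m × Fin n => (p.1, σ p.2)) (esymW w k) = esymW w k := by
  unfold esymW
  rw [map_sum]
  have h1 : ∀ K ∈ powersetCard k (univ : Finset (Fin n)),
      rename (fun p : Fin m × Fin n => (p.1, σ p.2)) (∏ i ∈ K, linW w i)
        = ∏ i ∈ K.image σ, linW w i := by
    intro K _
    rw [map_prod]
    simp only [linW_rename]
    rw [Finset.prod_image (fun x _ y _ h => σ.injective h)]
  rw [Finset.sum_congr rfl h1]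
  apply Finset.sum_nbij' (i := fun K => K.image σ) (j := fun K => K.image σ.symm)
  · intro K hK
    simp only [mem_powersetCard] at hK ⊢
    exact ⟨fun x _ => mem_univ x, by rw [Finset.card_image_of_injective _ σ.injective, hK.2]⟩
  · intro K hK
    simp only [mem_powersetCard] at hK ⊢
    exact ⟨fun x _ => mem_univ x, by rw [Finset.card_image_of_injective _ σ.symm.injective, hK.2]⟩
  · intro K _
    rw [Finset.image_image]
    simp
  · intro K _
    rw [Finset.image_image]
    simp
  · intro K _
    rfl

/-- the count `M_w` -/
def MW (u : Fin m × Fin n → ZMod 2) (w : Fin m → ZMod 2) : ℕ :=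
  (univ.filter (fun i : Fin n => (∑ j, w j * u (j, i)) = 1)).card

lemma esymW_eval (u : Fin m × Fin n → ZMod 2) (w : Fin m → ZMod 2) (k : ℕ) :
    eval u (esymW w k) = (Nat.choose (MW u w) k : ZMod 2) := by
  unfold esymW
  rw [map_sum]
  have : ∀ K ∈ powersetCard k (univ : Finset (Fin n)),
      eval u (∏ i ∈ K, linW w i) = ∏ i ∈ K, (∑ j, w j * u (j, i)) := by
    intro K _
    rw [map_prod]
    congr 1; ext i
    simp [linW, map_sum]
  rw [Finset.sum_congr rfl this]
  exact esym_eval_eq_choose _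

end Esym

section Fourier
variable {n m : ℕ}

lemma card_dot_zero (hm : 1 ≤ m) {d : Fin m → ZMod 2} (hd : d ≠ 0) :
    (univ.filter (fun w : Fin m → ZMod 2 => ∑ j, w j * d j = 0)).card = 2 ^ (m - 1) := by
  obtain ⟨j0, hj0⟩ : ∃ j0, d j0 ≠ 0 := Function.ne_iff.mp hd
  have hdj0 : d j0 = 1 := zmod2_ne_zero hj0
  set ι : (Fin m → ZMod 2) → (Fin m → ZMod 2) := fun w => w + Pi.single j0 1 with hι
  have hdot : ∀ w : Fin m → ZMod 2, ∑ j, (ι w) j * d j = (∑ j, w j * d j) + 1 := by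
    intro w
    simp only [hι, Pi.add_apply, add_mul, Finset.sum_add_distrib]
    congr 1
    rw [Finset.sum_eq_single j0]
    · simp [hdj0]
    · intro b _ hb; simp [Pi.single_apply, hb]
    · intro h; exact absurd (mem_univ j0) h
  have hinv : ∀ w, ι (ι w) = w := by
    intro w
    simp only [hι]
    ext j
    simp only [Pi.add_apply]
    rw [add_assoc, CharTwo.add_self_eq_zero, add_zero]
  have hcard : (univ.filter (fun w : Fin m → ZMod 2 => ∑ j, w j * d j = 0)).card
      = (univ.filter (fun w : Fin m → ZMod 2 => ∑ j, w j * d j = 1)).card := by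
    apply Finset.card_bij' (i := fun w _ => ι w) (j := fun w _ => ι w)
    · intro w hw
      simp only [mem_filter, mem_univ, true_and] at hw ⊢
      rw [hdot, hw]; ring
    · intro w hw
      simp only [mem_filter, mem_univ, true_and] at hw ⊢
      rw [hdot, hw]; ring_nf; decide
    · intro w _; exact hinv w
    · intro w _; exact hinv w
  have htot : (univ.filter (fun w : Fin m → ZMod 2 => ∑ j, w j * d j = 0)).card
      + (univ.filter (fun w : Fin m → ZMod 2 => ∑ j, w j * d j = 1)).card
      = 2 ^ m := by
    have heq : (univ.filter (fun w : Fin m → ZMod 2 => ∑ j, w j * d j = 1))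
        = (univ.filter (fun w : Fin m → ZMod 2 => ¬ (∑ j, w j * d j = 0))) := by
      apply Finset.filter_congr
      intro w _
      constructor
      · intro h h0; rw [h0] at h; exact one_ne_zero h.symm
      · intro h; exact zmod2_ne_zero h
    rw [heq, Finset.card_filter_add_card_filter_not]
    simp [Finset.card_univ]
  have h2m : 2 ^ m = 2 ^ (m - 1) * 2 := by
    cases m with
    | zero => exact absurd hm (by omega)
    | succ k => simp [pow_succ]
  rw [← hcard, ← two_mul] at htot
  exact Nat.eq_of_mul_eq_mul_left two_pos (htot.trans (h2m.trans (mul_comm _ _)))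

lemma card_dot_pair (hm : 1 ≤ m) (c c' : Fin m → ZMod 2) :
    (univ.filter (fun w : Fin m → ZMod 2 => ∑ j, w j * c' j = ∑ j, w j * c j)).card
      = if c' = c then 2 ^ m else 2 ^ (m - 1) := by
  split_ifs with h
  · subst h
    simp [Finset.filter_true_of_mem, Finset.card_univ]
  · have hd : c' + c ≠ 0 := by
      intro h0; apply h; funext j
      have := congrFun h0 j
      simp only [Pi.add_apply, Pi.zero_apply] at this
      rcases zmod2_cases (c j) with hc | hc <;> rcases zmod2_cases (c' j) with hc' | hc' <;>
        simp_all
    rw [← card_dot_zero hm hd]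
    apply congrArg Finset.card
    apply Finset.filter_congr
    intro w _
    constructor
    · intro hw
      simp only [Pi.add_apply, mul_add, Finset.sum_add_distrib, hw]
      rcases zmod2_cases (∑ j, w j * c j) with h0 | h0 <;> rw [h0] <;> decide
    · intro hw
      have : (∑ j, w j * c' j) + (∑ j, w j * c j) = 0 := by
        rw [← Finset.sum_add_distrib]
        simpa [mul_add] using hw
      rcases zmod2_cases (∑ j, w j * c j) with h0 | h0 <;>
        rcases zmod2_cases (∑ j, w j * c' j) with h1 | h1 <;> simp_all
end Fourier

section Count
variable {n m : ℕ}

lemma key_count (hm : 1 ≤ m) (x : Fin m × Fin n → ZMod 2) (c : Fin m → ZMod 2) :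
    ∑ w : Fin m → ZMod 2,
        (univ.filter (fun i : Fin n => ∑ j, w j * x (j, i) = ∑ j, w j * c j)).card
      = n * 2 ^ (m - 1)
        + (univ.filter (fun i : Fin n => (fun j => x (j, i)) = c)).card * 2 ^ (m - 1) := by
  have swap : ∑ w : Fin m → ZMod 2,
        (univ.filter (fun i : Fin n => ∑ j, w j * x (j, i) = ∑ j, w j * c j)).card
      = ∑ i : Fin n,
        (univ.filter (fun w : Fin m → ZMod 2 => ∑ j, w j * x (j, i) = ∑ j, w j * c j)).card := by
    simp only [Finset.card_filter]
    exact Finset.sum_comm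
  rw [swap]
  have inner : ∀ i : Fin n,
      (univ.filter (fun w : Fin m → ZMod 2 => ∑ j, w j * x (j, i) = ∑ j, w j * c j)).card
        = if (fun j => x (j, i)) = c then 2 ^ m else 2 ^ (m - 1) := by
    intro i
    simpa using card_dot_pair hm c (fun j => x (j, i))
  rw [Finset.sum_congr rfl (fun i _ => inner i)]
  have h2m : (2:ℕ) ^ m = 2 ^ (m - 1) + 2 ^ (m - 1) := by
    cases m with
    | zero => exact absurd hm (by omega)
    | succ k => simp [pow_succ]; ring
  have : ∀ i : Fin n, (if (fun j => x (j, i)) = c then 2 ^ m else 2 ^ (m - 1))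
      = 2 ^ (m - 1) + (if (fun j => x (j, i)) = c then 2 ^ (m - 1) else 0) := by
    intro i
    split_ifs <;> simp [h2m]
  rw [Finset.sum_congr rfl (fun i _ => this i), Finset.sum_add_distrib]
  congr 1
  · simp [mul_comm]
  · rw [Finset.sum_ite, Finset.sum_const, Finset.sum_const]
    simp [mul_comm]

lemma count_eq_of_MW_eq (hm : 1 ≤ m) (u v : Fin m × Fin n → ZMod 2)
    (h : ∀ w : Fin m → ZMod 2, MW u w = MW v w) (c : Fin m → ZMod 2) :
    (univ.filter (fun i : Fin n => (fun j => u (j, i)) = c)).card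
      = (univ.filter (fun i : Fin n => (fun j => v (j, i)) = c)).card := by
  have perw : ∀ w : Fin m → ZMod 2,
      (univ.filter (fun i : Fin n => ∑ j, w j * u (j, i) = ∑ j, w j * c j)).card
        = (univ.filter (fun i : Fin n => ∑ j, w j * v (j, i) = ∑ j, w j * c j)).card := by
    intro w
    rcases zmod2_cases (∑ j, w j * c j) with h0 | h1
    · have haux : ∀ x : Fin m × Fin n → ZMod 2,
          (univ.filter (fun i : Fin n => ∑ j, w j * x (j, i) = ∑ j, w j * c j)).card
            + MW x w = n := by
        intro x
        rw [h0]
        have hco : (univ.filter (fun i : Fin n => ¬ (∑ j, w j * x (j, i) = 0)))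
            = (univ.filter (fun i : Fin n => ∑ j, w j * x (j, i) = 1)) := by
          apply Finset.filter_congr
          intro i _
          exact ⟨fun hh => zmod2_ne_zero hh, fun hh h0' => by rw [h0'] at hh; exact one_ne_zero hh.symm⟩
        have := Finset.card_filter_add_card_filter_not
          (s := (univ : Finset (Fin n))) (p := fun i => ∑ j, w j * x (j, i) = 0)
        rw [hco] at this
        unfold MW
        rw [this]
        simp [Finset.card_univ]
      have hu := haux u
      have hv := haux v
      rw [h w] at hu
      exact Nat.add_right_cancel (hu.trans hv.symm)
    · have haux : ∀ x : Fin m × Fin n → ZMod 2,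
          (univ.filter (fun i : Fin n => ∑ j, w j * x (j, i) = ∑ j, w j * c j)).card
            = MW x w := by
        intro x
        unfold MW
        rw [h1]
      rw [haux u, haux v, h w]
  have keyu := key_count hm u c
  have keyv := key_count hm v c
  rw [Finset.sum_congr rfl (fun w _ => perw w)] at keyu
  rw [keyv] at keyu
  have := Nat.add_left_cancel keyu.symm
  exact Nat.eq_of_mul_eq_mul_right (pow_pos two_pos _) this
end Count


theorem upper_bound (n m : ℕ) (hm : 1 ≤ m) :
    IsSepMulti n m (HomInvMulti n m (2 ^ Nat.log 2 n)) := by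
  intro u v hnot
  by_contra hc
  push_neg at hc
  have hMW : ∀ w : Fin m → ZMod 2, MW u w = MW v w := by
    intro w
    by_contra hne
    have hMu : MW u w ≤ n := (Finset.card_filter_le _ _).trans (by simp)
    have hMv : MW v w ≤ n := (Finset.card_filter_le _ _).trans (by simp)
    obtain ⟨b, hb, hch⟩ := exists_pow_choose_ne hMu hMv hne
    apply hch
    have hmem : esymW w (2 ^ b) ∈ HomInvMulti n m (2 ^ Nat.log 2 n) :=
      ⟨esymW_invariant w _, ⟨2 ^ b, Nat.pow_le_pow_right two_pos hb, esymW_homogeneous w _⟩⟩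
    have := hc _ hmem
    rwa [esymW_eval, esymW_eval] at this
  have hcount := count_eq_of_MW_eq hm u v hMW
  apply hnot
  have e : ∀ c : Fin m → ZMod 2,
      {i : Fin n // (fun j => v (j, i)) = c} ≃ {i : Fin n // (fun j => u (j, i)) = c} := by
    intro c
    apply Fintype.equivOfCardEq
    rw [Fintype.card_subtype, Fintype.card_subtype]
    exact (hcount c).symm
  refine ⟨Equiv.ofFiberEquiv e, fun p => ?_⟩
  have := Equiv.ofFiberEquiv_map e p.2
  calc u (p.1, Equiv.ofFiberEquiv e p.2) = (fun j => u (j, Equiv.ofFiberEquiv e p.2)) p.1 := rfl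
    _ = (fun j => v (j, p.2)) p.1 := by rw [this]
    _ = v p := rfl

section Lower
variable {n m : ℕ}

/-- set of columns appearing in a monomial -/
def cols (α : Fin m × Fin n →₀ ℕ) : Finset (Fin n) := α.support.image Prod.snd

lemma cols_mapDomain (σ : Equiv.Perm (Fin n)) (α : Fin m × Fin n →₀ ℕ) :
    cols (Finsupp.mapDomain (fun p : Fin m × Fin n => (p.1, σ p.2)) α)
      = (cols α).image σ := by
  have ginj : Function.Injective (fun p : Fin m × Fin n => (p.1, σ p.2)) := by
    intro a b h
    simp only [Prod.mk.injEq] at h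
    exact Prod.ext h.1 (σ.injective h.2)
  unfold cols
  rw [Finsupp.mapDomain_support_of_injective ginj, Finset.image_image, Finset.image_image]
  rfl

lemma card_filter_cols_image (f : MvPolynomial (Fin m × Fin n) (ZMod 2))
    (hinv : ∀ σ : Equiv.Perm (Fin n),
      rename (fun p : Fin m × Fin n => (p.1, σ p.2)) f = f)
    (σ : Equiv.Perm (Fin n)) (A : Finset (Fin n)) :
    (f.support.filter (fun α => cols α = A)).card
      = (f.support.filter (fun α => cols α = A.image σ)).card := by
  have ginj : Function.Injective (fun p : Fin m × Fin n => (p.1, σ p.2)) := by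
    intro a b h
    simp only [Prod.mk.injEq] at h
    exact Prod.ext h.1 (σ.injective h.2)
  have ginj' : Function.Injective (fun p : Fin m × Fin n => (p.1, σ.symm p.2)) := by
    intro a b h
    simp only [Prod.mk.injEq] at h
    exact Prod.ext h.1 (σ.symm.injective h.2)
  have hcoeff : ∀ α, coeff (Finsupp.mapDomain (fun p : Fin m × Fin n => (p.1, σ p.2)) α) f
      = coeff α f := by
    intro α
    conv_lhs => rw [← hinv σ]
    exact coeff_rename_mapDomain _ ginj f α
  have hcoeff' : ∀ α, coeff (Finsupp.mapDomain (fun p : Fin m × Fin n => (p.1, σ.symm p.2)) α) f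
      = coeff α f := by
    intro α
    conv_lhs => rw [← hinv σ.symm]
    exact coeff_rename_mapDomain _ ginj' f α
  have hleft : ∀ α : Fin m × Fin n →₀ ℕ, Finsupp.mapDomain (fun p : Fin m × Fin n => (p.1, σ.symm p.2))
      (Finsupp.mapDomain (fun p : Fin m × Fin n => (p.1, σ p.2)) α) = α := by
    intro α
    rw [← Finsupp.mapDomain_comp]
    have : ((fun p : Fin m × Fin n => (p.1, σ.symm p.2)) ∘ (fun p : Fin m × Fin n => (p.1, σ p.2)))
        = id := by
      funext p
      simp
    rw [this, Finsupp.mapDomain_id]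
  have hright : ∀ α : Fin m × Fin n →₀ ℕ, Finsupp.mapDomain (fun p : Fin m × Fin n => (p.1, σ p.2))
      (Finsupp.mapDomain (fun p : Fin m × Fin n => (p.1, σ.symm p.2)) α) = α := by
    intro α
    rw [← Finsupp.mapDomain_comp]
    have : ((fun p : Fin m × Fin n => (p.1, σ p.2)) ∘ (fun p : Fin m × Fin n => (p.1, σ.symm p.2)))
        = id := by
      funext p
      simp
    rw [this, Finsupp.mapDomain_id]
  apply Finset.card_bij'
    (i := fun α _ => Finsupp.mapDomain (fun p : Fin m × Fin n => (p.1, σ p.2)) α)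
    (j := fun β _ => Finsupp.mapDomain (fun p : Fin m × Fin n => (p.1, σ.symm p.2)) β)
  · intro α hα
    rw [Finset.mem_filter] at hα ⊢
    refine ⟨?_, ?_⟩
    · rw [MvPolynomial.mem_support_iff, hcoeff]
      exact MvPolynomial.mem_support_iff.mp hα.1
    · rw [cols_mapDomain, hα.2]
  · intro β hβ
    rw [Finset.mem_filter] at hβ ⊢
    refine ⟨?_, ?_⟩
    · rw [MvPolynomial.mem_support_iff, hcoeff']
      exact MvPolynomial.mem_support_iff.mp hβ.1
    · have : β = Finsupp.mapDomain (fun p : Fin m × Fin n => (p.1, σ p.2))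
          (Finsupp.mapDomain (fun p : Fin m × Fin n => (p.1, σ.symm p.2)) β) := (hright β).symm
      have hc := cols_mapDomain σ.symm β
      rw [hβ.2] at hc
      rw [hc, Finset.image_image]
      simp
  · intro α _; exact hleft α
  · intro β _; exact hright β
end Lower

section Lower2
variable {n m : ℕ}

lemma even_card_T (f : MvPolynomial (Fin m × Fin n) (ZMod 2))
    (hinv : ∀ σ : Equiv.Perm (Fin n),
      rename (fun p : Fin m × Fin n => (p.1, σ p.2)) f = f)
    {e : ℕ} (hhom : f.IsHomogeneous e) (he : 1 ≤ e) (t : ℕ) (heD : e < 2 ^ t)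
    (hDn : 2 ^ t ≤ n) :
    2 ∣ (f.support.filter
      (fun α => cols α ⊆ univ.filter (fun i : Fin n => (i : ℕ) < 2 ^ t))).card := by
  set D := 2 ^ t with hDdef
  set ID : Finset (Fin n) := univ.filter (fun i : Fin n => (i : ℕ) < D) with hIDdef
  have hID : ID.card = D := by
    have hmap : ID = Finset.map (Fin.castLEEmb hDn) univ := by
      ext i
      simp only [hIDdef, Finset.mem_filter, Finset.mem_univ, true_and, Finset.mem_map,
        Fin.castLEEmb_apply]
      constructor
      · intro h; exact ⟨⟨i, h⟩, rfl⟩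
      · rintro ⟨a, rfl⟩; exact a.2
    rw [hmap, Finset.card_map, Finset.card_univ, Fintype.card_fin]
  have hdeg : ∀ α ∈ f.support, (cols α).card ≤ e := by
    intro α hα
    have h1 : (cols α).card ≤ α.support.card := Finset.card_image_le
    have h2 : α.support.card ≤ α.degree := by
      unfold Finsupp.degree
      calc α.support.card = ∑ p ∈ α.support, 1 := by simp
        _ ≤ ∑ p ∈ α.support, α p :=
          Finset.sum_le_sum fun p hp => Nat.one_le_iff_ne_zero.mpr (Finsupp.mem_support_iff.mp hp)
    have h3 : α.degree = e := by
      by_contra hne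
      exact MvPolynomial.mem_support_iff.mp hα (hhom.coeff_eq_zero hne)
    omega
  have hsplit : (f.support.filter (fun α => cols α ⊆ ID)).card
      = ∑ A ∈ ID.powerset, (f.support.filter (fun α => cols α = A)).card := by
    rw [Finset.card_eq_sum_card_fiberwise
      (f := cols) (t := ID.powerset)
      (fun α hα => Finset.mem_powerset.mpr (Finset.mem_filter.mp hα).2)]
    apply Finset.sum_congr rfl
    intro A hA
    have hAsub := Finset.mem_powerset.mp hA
    rw [Finset.filter_filter]
    apply congrArg Finset.card
    ext α
    simp only [Finset.mem_filter]
    exact ⟨fun h => ⟨h.1, h.2.2⟩, fun h => ⟨h.1, h.2 ▸ hAsub, h.2⟩⟩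
  rw [hsplit, Finset.sum_powerset]
  apply Finset.dvd_sum
  intro j hj
  by_cases hcase : j = 0 ∨ e < j
  · have hzero : ∀ A ∈ Finset.powersetCard j ID,
        (f.support.filter (fun α => cols α = A)).card = 0 := by
      intro A hA
      obtain ⟨hAsub, hAcard⟩ := Finset.mem_powersetCard.mp hA
      rw [Finset.card_eq_zero, Finset.filter_eq_empty_iff]
      intro α hα hcols
      rcases hcase with h0 | hgt
      · have hAempty : A = ∅ := Finset.card_eq_zero.mp (by rw [hAcard, h0])
        rw [hAempty] at hcols
        have hsupp : α.support = ∅ := Finset.image_eq_empty.mp hcols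
        have hα0 : α = 0 := Finsupp.support_eq_empty.mp hsupp
        have := hhom.coeff_eq_zero (d := 0) (by rw [map_zero]; omega)
        rw [hα0] at hα
        exact MvPolynomial.mem_support_iff.mp hα this
      · have := hdeg α hα
        rw [hcols, hAcard] at this
        omega
    rw [Finset.sum_congr rfl hzero]
    simp
  · push_neg at hcase
    obtain ⟨hj0, hje⟩ := hcase
    have hjD : j ≤ ID.card := by rw [hID]; omega
    obtain ⟨A₀, hA₀⟩ := Finset.powersetCard_nonempty.mpr hjD
    have hconst : ∀ A ∈ Finset.powersetCard j ID,
        (f.support.filter (fun α => cols α = A)).card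
          = (f.support.filter (fun α => cols α = A₀)).card := by
      intro A hA
      obtain ⟨hAsub, hAcard⟩ := Finset.mem_powersetCard.mp hA
      obtain ⟨hA₀sub, hA₀card⟩ := Finset.mem_powersetCard.mp hA₀
      have e0 : {x // x ∈ A₀} ≃ {x // x ∈ A} := Fintype.equivOfCardEq (by
        rw [Fintype.card_coe, Fintype.card_coe, hAcard, hA₀card])
      have himg : A₀.image e0.extendSubtype = A := by
        apply Finset.eq_of_subset_of_card_le
        · intro y hy
          obtain ⟨x, hx, rfl⟩ := Finset.mem_image.mp hy
          exact e0.extendSubtype_mem x hx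
        · rw [Finset.card_image_of_injective _ e0.extendSubtype.injective, hAcard, hA₀card]
      rw [← himg]
      exact (card_filter_cols_image f hinv e0.extendSubtype A₀).symm
    rw [Finset.sum_congr rfl hconst, Finset.sum_const, Finset.card_powersetCard, hID]
    apply Dvd.dvd.mul_right
    exact Nat.Prime.dvd_choose_pow Nat.prime_two hj0 (by omega)
end Lower2

theorem lower_bound (n m : ℕ) (hm : 1 ≤ m) (hn : 2 ≤ n) (d : ℕ) (hd : d < 2 ^ Nat.log 2 n) :
    ¬ IsSepMulti n m (HomInvMulti n m d) := by
  intro hsep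
  set t := Nat.log 2 n with ht
  set D := 2 ^ t with hD
  have hDn : D ≤ n := Nat.pow_log_le_self 2 (by omega)
  have hD1 : 1 ≤ D := Nat.one_le_two_pow
  set u : Fin m × Fin n → ZMod 2 := fun p => if ((p.2 : ℕ) < D) then 1 else 0 with hu
  set v : Fin m × Fin n → ZMod 2 := fun _ => 0 with hv
  have hnot : ¬ ∃ σ : Equiv.Perm (Fin n), ∀ p : Fin m × Fin n, u (p.1, σ p.2) = v p := by
    rintro ⟨σ, hσ⟩
    have h0n : (0 : ℕ) < n := by omega
    have := hσ (⟨0, hm⟩, σ.symm ⟨0, h0n⟩)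
    simp only [hu, hv, Equiv.apply_symm_apply] at this
    have h01 : (1 : ZMod 2) = 0 := by
      rw [← this]
      rw [if_pos]
      exact hD1
    exact one_ne_zero h01
  obtain ⟨f, hf, hne⟩ := hsep u v hnot
  apply hne
  obtain ⟨hinv, e, hed, hhom⟩ := hf
  by_cases he : e = 0
  · subst he
    have hC : f = C (coeff 0 f) := by
      ext α
      rw [coeff_C]
      split_ifs with h
      · rw [h]
      · exact hhom.coeff_eq_zero (fun hdeg => h ((Finsupp.degree_eq_zero_iff α).mp hdeg).symm)
    rw [hC]
    simp
  · have he1 : 1 ≤ e := by omega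
    have heD : e < D := by omega
    have hv0 : eval v f = 0 := by
      rw [hv]
      rw [show (eval (fun _ => (0 : ZMod 2)) f) = constantCoeff f from
        congrFun (congrArg DFunLike.coe eval_zero') f]
      rw [constantCoeff_eq]
      exact hhom.coeff_eq_zero (by rw [map_zero]; omega)
    have hval : eval u f = ((f.support.filter
        (fun α => cols α ⊆ univ.filter (fun i : Fin n => (i : ℕ) < D))).card : ZMod 2) := by
      rw [eval_eq]
      have hprod : ∀ α ∈ f.support, (∏ p ∈ α.support, u p ^ α p)
          = if cols α ⊆ univ.filter (fun i : Fin n => (i : ℕ) < D) then 1 else 0 := by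
        intro α _
        split_ifs with h
        · apply Finset.prod_eq_one
          intro p hp
          have hpc : p.2 ∈ cols α := Finset.mem_image_of_mem _ hp
          have := Finset.mem_filter.mp (h hpc)
          rw [hu]
          simp only [if_pos this.2]
          exact one_pow _
        · obtain ⟨i, hi, hiD⟩ : ∃ i ∈ cols α, ¬ ((i : ℕ) < D) := by
            obtain ⟨i, hi, hn'⟩ := Finset.not_subset.mp h
            exact ⟨i, hi, fun hlt => hn' (Finset.mem_filter.mpr ⟨Finset.mem_univ i, hlt⟩)⟩
          obtain ⟨p, hp, hpi⟩ := Finset.mem_image.mp hi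
          apply Finset.prod_eq_zero hp
          rw [hu]
          simp only [hpi, if_neg hiD]
          exact zero_pow (Finsupp.mem_support_iff.mp hp)
      rw [Finset.sum_congr rfl (fun α hα => by
        rw [hprod α hα, zmod2_ne_zero (MvPolynomial.mem_support_iff.mp hα), one_mul])]
      rw [Finset.sum_boole]
    rw [hval, hv0]
    rw [ZMod.natCast_eq_zero_iff]
    exact even_card_T f hinv hhom he1 t heD hDn


/-- for `F = F_2`, `m ≥ 1` and `n ≥ 2`,
`β_sep(F_2[V^m]^{S_n}) = 2^{⌊log_2 n⌋}`: the homogeneous invariants of degree at most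
`2^{⌊log_2 n⌋}` separate the `S_n`-orbits on `V^m`, and no smaller bound suffices. -/
theorem stmt18 (n m : ℕ) (hm : 1 ≤ m) (hn : 2 ≤ n) :
    IsSepMulti n m (HomInvMulti n m (2 ^ Nat.log 2 n)) ∧
    ∀ d < 2 ^ Nat.log 2 n, ¬ IsSepMulti n m (HomInvMulti n m d) := by
  exact ⟨upper_bound n m hm, fun d hd => lower_bound n m hm hn d hd⟩
end

section
/- Over F_2, if the elementary symmetric polynomial s_t separates e_a and e_b for some 1 ≤ t ≤ n and 0 ≤ a, b ≤ n, then there exists r ≥ 0 with 2^r ≤ t such that s_{2^r} separates e_a and e_b. Equivalently, if C(a,t) ≢ C(b,t) (mod 2), then there exists r ≥ 0 with 2^r ≤ t such that C(a,2^r) ≢ C(b,2^r) (mod 2). -/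
open MvPolynomial

/-- `e_i ∈ F_2^n`: the vector whose first `i` coordinates are `1` and the rest `0`. -/
def eVec (n i : ℕ) : Fin n → ZMod 2 := fun j => if (j : ℕ) < i then 1 else 0

private lemma lucas2 (n k A : ℕ) (hk : k < 2 ^ A) :
    Nat.choose n k % 2 = (∏ i ∈ Finset.range A, Nat.choose (n / 2 ^ i % 2) (k / 2 ^ i % 2)) % 2 := by
  have : Fact (Nat.Prime 2) := ⟨Nat.prime_two⟩
  have h := Choose.choose_modEq_choose_mul_prod_range_choose (n := n) (k := k) (p := 2) A
  rw [Nat.div_eq_of_lt hk] at h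
  simp only [Nat.choose_zero_right, Nat.cast_one, one_mul] at h
  have h2 : Nat.choose n k ≡ ∏ i ∈ Finset.range A,
      Nat.choose (n / 2 ^ i % 2) (k / 2 ^ i % 2) [MOD 2] := by
    rw [← Int.natCast_modEq_iff]; exact_mod_cast h
  exact h2

private lemma choose_two_pow (n r : ℕ) : Nat.choose n (2 ^ r) % 2 = n / 2 ^ r % 2 := by
  rw [lucas2 n (2 ^ r) (r + 1) (by exact Nat.pow_lt_pow_succ one_lt_two)]
  rw [Finset.prod_range_succ]
  have h1 : ∀ i ∈ Finset.range r, Nat.choose (n / 2 ^ i % 2) (2 ^ r / 2 ^ i % 2) = 1 := by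
    intro i hi
    have hir : i < r := Finset.mem_range.mp hi
    have : 2 ^ r / 2 ^ i = 2 ^ (r - i) := Nat.pow_div (le_of_lt hir) two_pos
    rw [this]
    have : 2 ^ (r - i) % 2 = 0 := by
      have : 2 ∣ 2 ^ (r - i) := dvd_pow_self 2 (by omega)
      omega
    rw [this, Nat.choose_zero_right]
  rw [Finset.prod_congr rfl h1, Finset.prod_const_one, one_mul, Nat.div_self (Nat.two_pow_pos r)]
  simp [Nat.choose_one_right, Nat.mod_mod_of_dvd]

private lemma key (a b t : ℕ) (ht1 : 1 ≤ t)
    (h : Nat.choose a t % 2 ≠ Nat.choose b t % 2) :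
    ∃ r, 2 ^ r ≤ t ∧ Nat.choose a (2 ^ r) % 2 ≠ Nat.choose b (2 ^ r) % 2 := by
  by_contra hc
  push_neg at hc
  apply h
  have hA : t < 2 ^ t := Nat.lt_two_pow_self
  rw [lucas2 a t t hA, lucas2 b t t hA]
  congr 1
  apply Finset.prod_congr rfl
  intro i _
  rcases Nat.mod_two_eq_zero_or_one (t / 2 ^ i) with h0 | h1
  · rw [h0, Nat.choose_zero_right, Nat.choose_zero_right]
  · have hle : 2 ^ i ≤ t := by
      rcases Nat.lt_or_ge t (2 ^ i) with hlt | hge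
      · rw [Nat.div_eq_of_lt hlt] at h1; omega
      · exact hge
    have := hc i hle
    rw [choose_two_pow, choose_two_pow] at this
    rw [h1, this]

private lemma eval_esymm_eVec (n i t : ℕ) (hi : i ≤ n) :
    eval (eVec n i) (esymm (Fin n) (ZMod 2) t) = (Nat.choose i t : ZMod 2) := by
  rw [esymm, map_sum]
  have hF : (Finset.univ.filter fun j : Fin n => (j : ℕ) < i).card = i := by
    rw [← Fintype.card_subtype]
    rw [Fintype.card_congr (Fin.castLEquiv hi).symm, Fintype.card_fin]
  have step : ∀ S : Finset (Fin n),
      eval (eVec n i) (∏ j ∈ S, X j) = if ∀ j ∈ S, j.val < i then (1 : ZMod 2) else 0 := by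
    intro S
    rw [map_prod]
    simp only [eval_X, eVec]
    simp [Finset.prod_boole]
  rw [Finset.sum_congr rfl fun S _ => step S, Finset.sum_boole]
  congr 1
  have hset : ((Finset.powersetCard t (Finset.univ : Finset (Fin n))).filter
      fun S => ∀ j ∈ S, j.val < i)
      = Finset.powersetCard t (Finset.univ.filter fun j : Fin n => (j : ℕ) < i) := by
    ext S
    simp only [Finset.mem_filter, Finset.mem_powersetCard, Finset.subset_univ, true_and,
      Finset.subset_iff, Finset.mem_univ]
    tauto
  rw [hset, Finset.card_powersetCard, hF]

/-- over `F_2`, if `s_t` separates `e_a` and `e_b` (`1 ≤ t ≤ n`,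
`0 ≤ a, b ≤ n`), then some `s_{2^r}` with `2^r ≤ t` separates them; equivalently,
if `C(a,t) ≢ C(b,t) (mod 2)` then `C(a,2^r) ≢ C(b,2^r) (mod 2)` for some `2^r ≤ t`. -/
theorem stmt19 (n t a b : ℕ) (ht1 : 1 ≤ t) (htn : t ≤ n) (ha : a ≤ n) (hb : b ≤ n) :
    (eval (eVec n a) (esymm (Fin n) (ZMod 2) t) ≠
        eval (eVec n b) (esymm (Fin n) (ZMod 2) t) →
      ∃ r, 2 ^ r ≤ t ∧
        eval (eVec n a) (esymm (Fin n) (ZMod 2) (2 ^ r)) ≠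
          eval (eVec n b) (esymm (Fin n) (ZMod 2) (2 ^ r))) ∧
    (Nat.choose a t % 2 ≠ Nat.choose b t % 2 →
      ∃ r, 2 ^ r ≤ t ∧ Nat.choose a (2 ^ r) % 2 ≠ Nat.choose b (2 ^ r) % 2) := by
  have cast_iff : ∀ m k : ℕ, ((m : ZMod 2) ≠ (k : ZMod 2)) ↔ m % 2 ≠ k % 2 := by
    intro m k
    rw [Ne, Ne, ZMod.natCast_eq_natCast_iff, Nat.ModEq]
  constructor
  · intro h
    rw [eval_esymm_eVec n a t ha, eval_esymm_eVec n b t hb, cast_iff] at h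
    obtain ⟨r, hr, hne⟩ := key a b t ht1 h
    refine ⟨r, hr, ?_⟩
    rw [eval_esymm_eVec n a _ ha, eval_esymm_eVec n b _ hb, cast_iff]
    exact hne
  · exact key a b t ht1
end
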